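/- arXiv:2505.09132 — 8 statements merged into one kernel-verified Lean document; each statement's English description precedes it below -/
import Mathlib

section
/- Let Φ : C → C and Ψ : D → D be endofunctors, C' ⊆ C and D' ⊆ D subcategories, and (L ⊣ R, η, ε) : C ⇄ D an adjunction that restricts to the subcategories (L restricts to C' → D', R restricts to D' → C', and the adjunction restricts accordingly). Let α : Ψ∘L ⇒ L∘Φ (a natural transformation between functors C' → D) be a natural isomorphism, and define β : Φ∘R ⇒ R∘Ψ (on D') by β := RΨε ∘ (α^{-1})‾R, where (α^{-1})‾ : Φ ⇒ RΨL is the adjoint transpose of α^{-1} : L∘Φ ⇒ Ψ∘L. Then (Alg_{L,α} ⊣ Alg_{R,β}) : Alg(Φ)|_{C'} ⇄ Alg(Ψ)|_{D'} is an adjunction whose unit and counit components are the components of η and ε. -/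
/-!
STATEMENT 2: Let `Φ : C → C` and `Ψ : D → D` be endofunctors, `C' ⊆ C` and `D' ⊆ D` (full)
subcategories, and `(L ⊣ R, η, ε) : C ⇄ D` an adjunction that restricts to the subcategories.
Let `α : Ψ∘L ⇒ L∘Φ` (a natural transformation between functors `C' → D`) be a natural
isomorphism, and define `β : Φ∘R ⇒ R∘Ψ` (on `D'`) by `β := RΨε ∘ (α⁻¹)‾R`, where
`(α⁻¹)‾ : Φ ⇒ RΨL` is the adjoint transpose of `α⁻¹ : L∘Φ ⇒ Ψ∘L`.  Then
`(Alg_{L,α} ⊣ Alg_{R,β}) : Alg(Φ)|_{C'} ⇄ Alg(Ψ)|_{D'}` is an adjunction whose unit and counit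
components are the components of `η` and `ε`.
-/

open CategoryTheory

universe v₁ v₂ u₁ u₂

variable {C : Type u₁} [Category.{v₁} C] {D : Type u₂} [Category.{v₂} D]

/-- The restriction of the category of `Φ`-algebras to the full subcategory given by `P`. -/
abbrev AlgSub (Φ : C ⥤ C) (P : C → Prop) :=
  ObjectProperty.FullSubcategory (fun A : Endofunctor.Algebra Φ => P A.a)

/-- The lifted functor `Alg_{L,α}` sending `(X, a)` to `(LX, La ∘ α_X)` and `f` to `Lf`. -/
def algMap (Φ : C ⥤ C) (Ψ : D ⥤ D) (P : C → Prop) (Q : D → Prop)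
    (L : C ⥤ D) (hL : ∀ X : C, P X → Q (L.obj X))
    (α : ObjectProperty.ι P ⋙ L ⋙ Ψ ⟶ ObjectProperty.ι P ⋙ Φ ⋙ L) :
    AlgSub Φ P ⥤ AlgSub Ψ Q where
  obj A := ⟨⟨L.obj A.obj.a, α.app ⟨A.obj.a, A.property⟩ ≫ L.map A.obj.str⟩, hL _ A.property⟩
  map {A B} f := ObjectProperty.homMk <|
    { f := L.map (Endofunctor.Algebra.Hom.f f.hom)
      h := by
        have hn := α.naturality (X := ⟨A.obj.a, A.property⟩) (Y := ⟨B.obj.a, B.property⟩)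
          (ObjectProperty.homMk (Endofunctor.Algebra.Hom.f f.hom))
        have hf := Endofunctor.Algebra.Hom.h f.hom
        dsimp at hn ⊢
        rw [← Category.assoc, hn, Category.assoc, ← L.map_comp, hf, L.map_comp, Category.assoc] }
  map_id A := by
    apply ObjectProperty.hom_ext
    apply Endofunctor.Algebra.ext
    show L.map (𝟙 A.obj.a) = 𝟙 (L.obj A.obj.a)
    simp
  map_comp {A B E} f g := by
    apply ObjectProperty.hom_ext
    apply Endofunctor.Algebra.ext
    show L.map (Endofunctor.Algebra.Hom.f f.hom ≫ Endofunctor.Algebra.Hom.f g.hom) =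
      L.map (Endofunctor.Algebra.Hom.f f.hom) ≫ L.map (Endofunctor.Algebra.Hom.f g.hom)
    simp


/-- Auxiliary: composition in `AlgSub` acts on underlying maps by composition. -/
@[simp] lemma algSub_comp_f {Φ : C ⥤ C} {P : C → Prop} {A B E : AlgSub Φ P}
    (f : A ⟶ B) (g : B ⟶ E) :
    Endofunctor.Algebra.Hom.f (f ≫ g).hom =
      Endofunctor.Algebra.Hom.f f.hom ≫ Endofunctor.Algebra.Hom.f g.hom := rfl

/-- Auxiliary: the identity in `AlgSub` has identity underlying map. -/
@[simp] lemma algSub_id_f {Φ : C ⥤ C} {P : C → Prop} (A : AlgSub Φ P) :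
    Endofunctor.Algebra.Hom.f (𝟙 A : A ⟶ A).hom = 𝟙 A.obj.a := rfl

theorem stmt2 (Φ : C ⥤ C) (Ψ : D ⥤ D) (P : C → Prop) (Q : D → Prop)
    (L : C ⥤ D) (R : D ⥤ C) (adj : L ⊣ R)
    (hL : ∀ X : C, P X → Q (L.obj X)) (hR : ∀ Y : D, Q Y → P (R.obj Y))
    (α : ObjectProperty.ι P ⋙ L ⋙ Ψ ⟶ ObjectProperty.ι P ⋙ Φ ⋙ L)
    [IsIso α]
    (β : ObjectProperty.ι Q ⋙ R ⋙ Φ ⟶ ObjectProperty.ι Q ⋙ Ψ ⋙ R)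
    (hβ : ∀ Y : ObjectProperty.FullSubcategory Q,
      β.app Y = adj.unit.app (Φ.obj (R.obj Y.obj)) ≫
        R.map ((inv α).app ⟨R.obj Y.obj, hR _ Y.property⟩) ≫
        R.map (Ψ.map (adj.counit.app Y.obj))) :
    ∃ adj' : algMap Φ Ψ P Q L hL α ⊣ algMap Ψ Φ Q P R hR β,
      (∀ A : AlgSub Φ P,
        Endofunctor.Algebra.Hom.f (adj'.unit.app A).hom = adj.unit.app A.obj.a) ∧
      (∀ B : AlgSub Ψ Q,
        Endofunctor.Algebra.Hom.f (adj'.counit.app B).hom = adj.counit.app B.obj.a) := by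
    classical
  -- the unit
  have unit_h : ∀ A : AlgSub Φ P,
      Φ.map (adj.unit.app A.obj.a) ≫
        (((algMap Φ Ψ P Q L hL α) ⋙ (algMap Ψ Φ Q P R hR β)).obj A).obj.str =
      A.obj.str ≫ adj.unit.app A.obj.a := by
    intro A
    obtain ⟨⟨X, a⟩, hP⟩ := A
    dsimp [algMap]
    rw [hβ]
    dsimp
    have h1 : Φ.map (adj.unit.app X) ≫ adj.unit.app (Φ.obj (R.obj (L.obj X))) =
        adj.unit.app (Φ.obj X) ≫ R.map (L.map (Φ.map (adj.unit.app X))) :=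
      adj.unit.naturality (Φ.map (adj.unit.app X))
    have h2 := α.naturality (X := ⟨X, hP⟩)
      (Y := ⟨R.obj (L.obj X), hR _ (hL _ hP)⟩) (ObjectProperty.homMk (adj.unit.app X))
    dsimp at h2
    -- L Φ η ≫ inv α = inv α ≫ Ψ L η
    have h3 : L.map (Φ.map (adj.unit.app X)) ≫
        (inv α).app ⟨R.obj (L.obj X), hR _ (hL _ hP)⟩ =
        (inv α).app ⟨X, hP⟩ ≫ Ψ.map (L.map (adj.unit.app X)) := by
      simp only [NatIso.isIso_inv_app]
      rw [IsIso.eq_inv_comp, ← reassoc_of% h2]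
      simp
    have h4 : Ψ.map (L.map (adj.unit.app X)) ≫ Ψ.map (adj.counit.app (L.obj X)) = 𝟙 _ := by
      simp only [← Ψ.map_comp, adj.left_triangle_components]
      simp
    calc Φ.map (adj.unit.app X) ≫
          (adj.unit.app (Φ.obj (R.obj (L.obj X))) ≫
            R.map ((inv α).app ⟨R.obj (L.obj X), hR _ (hL _ hP)⟩) ≫
            R.map (Ψ.map (adj.counit.app (L.obj X)))) ≫
          R.map (α.app ⟨X, hP⟩ ≫ L.map a)
        = adj.unit.app (Φ.obj X) ≫
            R.map (L.map (Φ.map (adj.unit.app X)) ≫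
              (inv α).app ⟨R.obj (L.obj X), hR _ (hL _ hP)⟩ ≫
              Ψ.map (adj.counit.app (L.obj X)) ≫ α.app ⟨X, hP⟩ ≫ L.map a) := by
          simp only [R.map_comp, Category.assoc]
          rw [reassoc_of% h1]
      _ = adj.unit.app (Φ.obj X) ≫ R.map (L.map a) := by
          rw [← Category.assoc, h3]
          simp only [Category.assoc, reassoc_of% h4, NatIso.isIso_inv_app,
            IsIso.inv_hom_id_assoc, Category.id_comp]
      _ = a ≫ adj.unit.app X := (adj.unit.naturality a).symm
  have counit_h : ∀ B : AlgSub Ψ Q,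
      Ψ.map (adj.counit.app B.obj.a) ≫ B.obj.str =
      (((algMap Ψ Φ Q P R hR β) ⋙ (algMap Φ Ψ P Q L hL α)).obj B).obj.str ≫
        adj.counit.app B.obj.a := by
    intro B
    obtain ⟨⟨Y, b⟩, hQ⟩ := B
    dsimp [algMap]
    rw [hβ]
    dsimp
    have h4 : L.map (adj.unit.app (Φ.obj (R.obj Y))) ≫
        adj.counit.app (L.obj (Φ.obj (R.obj Y))) = 𝟙 _ :=
      adj.left_triangle_components _
    have h5 : ∀ {Z : D} (g : L.obj (Φ.obj (R.obj Y)) ⟶ Z),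
        L.map (R.map g) ≫ adj.counit.app Z = adj.counit.app _ ≫ g :=
      fun g => adj.counit.naturality g
    refine Eq.symm ?_
    calc (α.app ⟨R.obj Y, hR _ hQ⟩ ≫
          L.map ((adj.unit.app (Φ.obj (R.obj Y)) ≫
            R.map ((inv α).app ⟨R.obj Y, hR _ hQ⟩) ≫
            R.map (Ψ.map (adj.counit.app Y))) ≫ R.map b)) ≫ adj.counit.app Y
        = α.app ⟨R.obj Y, hR _ hQ⟩ ≫ L.map (adj.unit.app (Φ.obj (R.obj Y))) ≫
            L.map (R.map ((inv α).app ⟨R.obj Y, hR _ hQ⟩ ≫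
              Ψ.map (adj.counit.app Y) ≫ b)) ≫ adj.counit.app Y := by
          simp only [L.map_comp, R.map_comp, Category.assoc]
      _ = α.app ⟨R.obj Y, hR _ hQ⟩ ≫ L.map (adj.unit.app (Φ.obj (R.obj Y))) ≫
            adj.counit.app _ ≫ (inv α).app ⟨R.obj Y, hR _ hQ⟩ ≫
            Ψ.map (adj.counit.app Y) ≫ b := by
          rw [h5]
      _ = Ψ.map (adj.counit.app Y) ≫ b := by
          rw [reassoc_of% h4]
          simp only [NatIso.isIso_inv_app, Category.id_comp, IsIso.hom_inv_id_assoc]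
  -- assemble
  let U : 𝟭 (AlgSub Φ P) ⟶ (algMap Φ Ψ P Q L hL α) ⋙ (algMap Ψ Φ Q P R hR β) :=
    { app := fun A => ObjectProperty.homMk { f := adj.unit.app A.obj.a, h := unit_h A }
      naturality := fun A B f => by
        apply ObjectProperty.hom_ext
        apply Endofunctor.Algebra.ext
        show f.hom.f ≫ adj.unit.app B.obj.a = adj.unit.app A.obj.a ≫ R.map (L.map f.hom.f)
        exact adj.unit.naturality f.hom.f }
  let E : (algMap Ψ Φ Q P R hR β) ⋙ (algMap Φ Ψ P Q L hL α) ⟶ 𝟭 (AlgSub Ψ Q) :=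
    { app := fun B => ObjectProperty.homMk { f := adj.counit.app B.obj.a, h := counit_h B }
      naturality := fun A B f => by
        apply ObjectProperty.hom_ext
        apply Endofunctor.Algebra.ext
        show L.map (R.map f.hom.f) ≫ adj.counit.app B.obj.a = adj.counit.app A.obj.a ≫ f.hom.f
        exact adj.counit.naturality f.hom.f }
  refine ⟨Adjunction.mkOfUnitCounit
    { unit := U
      counit := E
      left_triangle := ?_
      right_triangle := ?_ }, fun A => rfl, fun B => rfl⟩
  · ext A
    dsimp [U, E, algMap]
    simp [adj.left_triangle_components]
  · ext B
    dsimp [U, E, algMap]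
    simp [adj.right_triangle_components]
end

section
/- Let Φ : C → C be an endofunctor and (L ⊣ R, η, ε) : C ⇄ D an adjunction such that Φ and LΦR have initial algebras with carriers μΦ and μ(LΦR). If the initial algebra correspondence for Φ and LΦR holds, then μΦ ≅ R(μ(LΦR)) in C and L(μΦ) ≅ μ(LΦR) in D. -/
/-!
STATEMENT 7: Let `Φ : C → C` be an endofunctor and `(L ⊣ R, η, ε) : C ⇄ D` an adjunction such
that `Φ` and `LΦR` have initial algebras with carriers `μΦ` and `μ(LΦR)`.  If the initial
algebra correspondence for `Φ` and `LΦR` holds (`ι_Φ` is initial in `Alg(Φ)|Fix_η(C)` and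
`ι_{LΦR}` is initial in `Alg(LΦR)|Fix_ε(D)`), then `μΦ ≅ R(μ(LΦR))` in `C` and
`L(μΦ) ≅ μ(LΦR)` in `D`.
-/

open CategoryTheory CategoryTheory.Limits

universe v₁ v₂ u₁ u₂

variable {C : Type u₁} [Category.{v₁} C] {D : Type u₂} [Category.{v₂} D]

theorem stmt7 (Φ : C ⥤ C) (L : C ⥤ D) (R : D ⥤ C) (adj : L ⊣ R)
    (ιΦ : Endofunctor.Algebra Φ) (hιΦ : IsInitial ιΦ)
    (ιΨ : Endofunctor.Algebra (R ⋙ Φ ⋙ L)) (hιΨ : IsInitial ιΨ)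
    (corr₁ : ∃ h : IsIso (adj.unit.app ιΦ.a),
      Nonempty (IsInitial (⟨ιΦ, h⟩ : AlgSub Φ (fun X : C => IsIso (adj.unit.app X)))))
    (corr₂ : ∃ h : IsIso (adj.counit.app ιΨ.a),
      Nonempty (IsInitial
        (⟨ιΨ, h⟩ : AlgSub (R ⋙ Φ ⋙ L) (fun Y : D => IsIso (adj.counit.app Y))))) :
    Nonempty (ιΦ.a ≅ R.obj ιΨ.a) ∧ Nonempty (L.obj ιΦ.a ≅ ιΨ.a) := by
  obtain ⟨hη, -⟩ := corr₁
  obtain ⟨hε, -⟩ := corr₂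
  -- `A` : the Φ-algebra on `R (μΨ)`.
  set A : Endofunctor.Algebra Φ :=
    ⟨R.obj ιΨ.a, adj.unit.app (Φ.obj (R.obj ιΨ.a)) ≫ R.map ιΨ.str⟩ with hA
  -- `B` : the (R⋙Φ⋙L)-algebra on `L (μΦ)`.
  set B : Endofunctor.Algebra (R ⋙ Φ ⋙ L) :=
    ⟨L.obj ιΦ.a, L.map (Φ.map (inv (adj.unit.app ιΦ.a)) ≫ ιΦ.str)⟩ with hB
  set f : ιΦ ⟶ A := hιΦ.to A with hf
  set g : ιΨ ⟶ B := hιΨ.to B with hg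
  -- `k = η⁻¹ ∘ R g : R μΨ → μΦ` is a Φ-algebra morphism `A ⟶ ιΦ`.
  set k : R.obj ιΨ.a ⟶ ιΦ.a := R.map g.f ≫ inv (adj.unit.app ιΦ.a) with hk
  -- transpose of `f`
  set fs : L.obj ιΦ.a ⟶ ιΨ.a := L.map f.f ≫ adj.counit.app ιΨ.a with hfs
  have hRfs : inv (adj.unit.app ιΦ.a) ≫ f.f = R.map fs := by
    rw [IsIso.inv_comp_eq, hfs]
    simp
    erw [adj.right_triangle_components ιΨ.a, Category.comp_id]
  have hKcomm : Φ.map k ≫ ιΦ.str = A.str ≫ k := by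
    have h2 : ιΨ.str ≫ g.f =
        L.map (Φ.map (R.map g.f)) ≫ L.map (Φ.map (inv (adj.unit.app ιΦ.a)) ≫ ιΦ.str) := by
      rw [← g.h]; rfl
    rw [← cancel_mono (adj.unit.app ιΦ.a)]
    show (Φ.map k ≫ ιΦ.str) ≫ adj.unit.app ιΦ.a =
      ((adj.unit.app (Φ.obj (R.obj ιΨ.a)) ≫ R.map ιΨ.str) ≫ k) ≫ adj.unit.app ιΦ.a
    have hkη : k ≫ adj.unit.app ιΦ.a = R.map g.f := by simp [hk]
    rw [Category.assoc, Category.assoc, hkη, Category.assoc, ← R.map_comp, h2, ← L.map_comp]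
    have e : Φ.map k = Φ.map (R.map g.f) ≫ Φ.map (inv (adj.unit.app ιΦ.a)) := by
      rw [hk, Φ.map_comp]
    rw [← Category.assoc, ← Category.assoc, e, Category.assoc (Φ.map (R.map g.f))]
    have nat := adj.unit.naturality
      (Φ.map (R.map g.f) ≫ Φ.map (inv (adj.unit.app ιΦ.a)) ≫ ιΦ.str)
    simp only [Functor.id_map, Functor.comp_map] at nat
    exact nat
  set K : A ⟶ ιΦ := ⟨k, hKcomm⟩ with hK
  have hFcomm : (R ⋙ Φ ⋙ L).map fs ≫ ιΨ.str = B.str ≫ fs := by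
    show L.map (Φ.map (R.map fs)) ≫ ιΨ.str =
      L.map (Φ.map (inv (adj.unit.app ιΦ.a)) ≫ ιΦ.str) ≫ L.map f.f ≫ adj.counit.app ιΨ.a
    rw [← hRfs, Φ.map_comp, L.map_comp, Category.assoc, L.map_comp, Category.assoc,
      ← L.map_comp_assoc ιΦ.str f.f, ← f.h]
    simp [hA]
    rw [← L.map_comp_assoc, ← f.h, L.map_comp, Category.assoc]
    congr 1
    show ιΨ.str = L.map (adj.unit.app (Φ.obj (R.obj ιΨ.a)) ≫ R.map ιΨ.str) ≫ adj.counit.app ιΨ.a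
    simp
  set Fs : B ⟶ ιΨ := ⟨fs, hFcomm⟩ with hFs
  -- endomorphisms of initial algebras are the identity
  have hfk : f.f ≫ k = 𝟙 ιΦ.a := by
    have h1 : f ≫ K = 𝟙 ιΦ := hιΦ.hom_ext _ _
    have := congrArg Endofunctor.Algebra.Hom.f h1
    simpa using this
  have hgfs : g.f ≫ fs = 𝟙 ιΨ.a := by
    have h1 : g ≫ Fs = 𝟙 ιΨ := hιΨ.hom_ext _ _
    have := congrArg Endofunctor.Algebra.Hom.f h1
    simpa using this
  have hLk : adj.counit.app (L.obj ιΦ.a) = L.map (inv (adj.unit.app ιΦ.a)) := by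
    rw [← cancel_epi (L.map (adj.unit.app ιΦ.a)), ← L.map_comp]
    simp
  constructor
  · exact ⟨⟨f.f, k, hfk, by
      rw [hk, Category.assoc, hRfs, ← R.map_comp, hgfs, R.map_id]⟩⟩
  · refine ⟨⟨fs, g.f, ?_, hgfs⟩⟩
    rw [hfs, Category.assoc, ← adj.counit_naturality g.f, hLk, ← L.map_comp, ← hk,
      ← L.map_comp, hfk, L.map_id]
end

section
/- Let Φ : C → C and Ψ : D → D be endofunctors, (L ⊣ R, η, ε) : C ⇄ D an adjunction, ρ : LΦR ⇒ Ψ a natural transformation, and assume D has an initial object and all colimits of chains, and that Ψ has an initial algebra ι_Ψ with carrier μΨ. If (1) ρ_{Ψ^i 0} is an isomorphism for each ordinal i, and (2) the initial chain of Ψ converges (W_Ψ(λ, λ+1) is an isomorphism for some ordinal λ), then Alg_{id,ρ}(ι_Ψ), the LΦR-algebra with carrier μΨ and structure map ι_Ψ ∘ ρ_{μΨ}, is an initial object of Alg(LΦR). -/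
/-!
STATEMENT 11: Let `Φ : C → C` and `Ψ : D → D` be endofunctors, `(L ⊣ R, η, ε) : C ⇄ D` an
adjunction, `ρ : LΦR ⇒ Ψ` a natural transformation, and assume `D` has an initial object and
all colimits of chains, and that `Ψ` has an initial algebra `ι_Ψ` with carrier `μΨ`.
If (1) `ρ_{Ψ^i 0}` is an isomorphism for each ordinal `i`, and (2) the initial chain of `Ψ`
converges (`W_Ψ(λ, λ+1)` is an isomorphism for some ordinal `λ`), then `Alg_{id,ρ}(ι_Ψ)` — the
`LΦR`-algebra with carrier `μΨ` and structure map `ι_Ψ ∘ ρ_{μΨ}` — is an initial object of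
`Alg(LΦR)`.
-/

open CategoryTheory Limits

universe w v₁ v₂ u₁ u₂

variable {C : Type u₁} [Category.{v₁} C] {D : Type u₂} [Category.{v₂} D]

/-- The inclusion of the ordinals below `i` into `Ordinal`. -/
def belowIncl (i : Ordinal.{w}) : {j : Ordinal.{w} // j < i} ⥤ Ordinal.{w} :=
  Monotone.functor (f := fun j => j.1) fun _ _ h => h

/-- The canonical cocone on the restriction of a chain `W` to the ordinals below `i`,
with cocone point `W.obj i`. -/
def chainCocone {E : Type u₂} [Category.{v₂} E] (W : Ordinal.{w} ⥤ E) (i : Ordinal.{w}) :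
    Cocone (belowIncl i ⋙ W) where
  pt := W.obj i
  ι :=
    { app := fun j => W.map (homOfLE j.2.le)
      naturality := fun j k f => by
        dsimp [belowIncl]
        rw [Category.comp_id, ← W.map_comp]
        congr 1 }

/-- Data exhibiting the functor `W : Ord ⥤ E` as the initial chain of an endofunctor `Ξ`. -/
structure InitialChainData {E : Type u₂} [Category.{v₂} E] (Ξ : E ⥤ E)
    (W : Ordinal.{w} ⥤ E) where
  isInitial : IsInitial (W.obj 0)
  succ_obj : ∀ i : Ordinal.{w}, W.obj (Order.succ i) = Ξ.obj (W.obj i)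
  succ_map : ∀ (i j : Ordinal.{w}) (h : i ≤ j),
    W.map (homOfLE (Order.succ_le_succ h)) =
      eqToHom (succ_obj i) ≫ Ξ.map (W.map (homOfLE h)) ≫ eqToHom (succ_obj j).symm
  isColimit : ∀ i : Ordinal.{w}, Order.IsSuccLimit i → IsColimit (chainCocone W i)

section Stmt11Aux
variable {E : Type u₂} [Category.{v₂} E]

/-- A "partial solution" up to stage `i`: a compatible family of maps from the chain `W`
to an algebra `(X, b)` of `Ξ`, satisfying the recurrence at successor stages. -/
structure Sol (Ξ : E ⥤ E) (W : Ordinal.{w} ⥤ E)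
    (s : ∀ i : Ordinal.{w}, Ξ.obj (W.obj i) ≅ W.obj (Order.succ i))
    (X : E) (b : Ξ.obj X ⟶ X) (i : Ordinal.{w}) where
  f : ∀ j, j ≤ i → (W.obj j ⟶ X)
  compat : ∀ j k (hjk : j ≤ k) (hk : k ≤ i),
    f j (hjk.trans hk) = W.map (homOfLE hjk) ≫ f k hk
  succEq : ∀ j (hj : Order.succ j ≤ i),
    f (Order.succ j) hj = (s j).inv ≫ Ξ.map (f j ((Order.le_succ j).trans hj)) ≫ b

section
variable {Ξ : E ⥤ E} {W : Ordinal.{w} ⥤ E}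
  {s : ∀ i : Ordinal.{w}, Ξ.obj (W.obj i) ≅ W.obj (Order.succ i)}
  {X : E} {b : Ξ.obj X ⟶ X}

theorem sol_unique (init : IsInitial (W.obj 0))
    (colim : ∀ i : Ordinal.{w}, Order.IsSuccLimit i → IsColimit (chainCocone W i)) :
    ∀ (j i i' : Ordinal.{w}) (h : j ≤ i) (h' : j ≤ i')
      (g : Sol Ξ W s X b i) (g' : Sol Ξ W s X b i'), g.f j h = g'.f j h' := by
  intro j
  induction j using Ordinal.induction with
  | h j IH =>
    intro i i' h h' g g'
    rcases Ordinal.zero_or_succ_or_isSuccLimit j with hj | ⟨k, hk⟩ | hj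
    · subst hj; exact init.hom_ext _ _
    · subst hk
      rw [g.succEq k h, g'.succEq k h']
      rw [IH k (Order.lt_succ_iff.mpr le_rfl) i i' _ _ g g']
    · apply (colim j hj).hom_ext
      intro k
      have e1 := (g.compat k.1 j k.2.le h).symm
      have e2 := (g'.compat k.1 j k.2.le h').symm
      dsimp [chainCocone]
      exact e1.trans ((IH k.1 k.2 i i' _ _ g g').trans e2.symm)

theorem sol_key (init : IsInitial (W.obj 0))
    (snat : ∀ (i j : Ordinal.{w}) (h : i ≤ j),
      (s i).hom ≫ W.map (homOfLE (Order.succ_le_succ h)) =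
        Ξ.map (W.map (homOfLE h)) ≫ (s j).hom)
    (colim : ∀ i : Ordinal.{w}, Order.IsSuccLimit i → IsColimit (chainCocone W i))
    (i : Ordinal.{w}) (g : Sol Ξ W s X b i) :
    g.f i le_rfl =
      W.map (homOfLE (Order.le_succ i)) ≫ (s i).inv ≫ Ξ.map (g.f i le_rfl) ≫ b := by
  have hinv : ∀ (a c : Ordinal.{w}) (h : a ≤ c),
      W.map (homOfLE (Order.succ_le_succ h)) ≫ (s c).inv
        = (s a).inv ≫ Ξ.map (W.map (homOfLE h)) := by
    intro a c h
    rw [Iso.comp_inv_eq, Category.assoc, ← snat a c h, Iso.inv_hom_id_assoc]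
  rcases Ordinal.zero_or_succ_or_isSuccLimit i with hi | ⟨k, hk⟩ | hi
  · subst hi; exact init.hom_ext _ _
  · subst hk
    have hdec : (homOfLE (Order.le_succ (Order.succ k)) :
        Order.succ k ⟶ Order.succ (Order.succ k)) =
        homOfLE (Order.succ_le_succ (Order.le_succ k)) := rfl
    have hin : W.map (homOfLE (Order.le_succ k)) ≫ g.f (Order.succ k) le_rfl
        = g.f k ((Order.le_succ k).trans le_rfl) :=
      (g.compat k (Order.succ k) (Order.le_succ k) le_rfl).symm
    conv_rhs => rw [hdec, ← Category.assoc, hinv k (Order.succ k) (Order.le_succ k),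
      Category.assoc, ← Functor.map_comp_assoc, hin]
    exact g.succEq k le_rfl
  · apply (colim i hi).hom_ext
    intro kk
    obtain ⟨k, hk⟩ := kk
    have hsk : Order.succ k ≤ i := (hi.succ_lt hk).le
    dsimp [chainCocone]
    have e1 : (homOfLE hk.le : k ⟶ i) ≫ homOfLE (Order.le_succ i)
        = homOfLE (Order.le_succ k) ≫ homOfLE (Order.succ_le_succ hk.le) := rfl
    calc W.map (homOfLE hk.le) ≫ g.f i le_rfl = g.f k (hk.le.trans le_rfl) :=
          (g.compat k i hk.le le_rfl).symm
      _ = W.map (homOfLE (Order.le_succ k)) ≫ g.f (Order.succ k) hsk :=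
          g.compat k (Order.succ k) (Order.le_succ k) hsk
      _ = W.map (homOfLE (Order.le_succ k)) ≫ (s k).inv ≫
            Ξ.map (g.f k ((Order.le_succ k).trans hsk)) ≫ b := by rw [g.succEq k hsk]
      _ = W.map (homOfLE (Order.le_succ k)) ≫ (s k).inv ≫
            Ξ.map (W.map (homOfLE hk.le) ≫ g.f i le_rfl) ≫ b := by
          rw [← g.compat k i hk.le le_rfl]
      _ = W.map (homOfLE (Order.le_succ k)) ≫ (s k).inv ≫
            Ξ.map (W.map (homOfLE hk.le)) ≫ Ξ.map (g.f i le_rfl) ≫ b := by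
          rw [Functor.map_comp]; simp only [Category.assoc]
      _ = W.map (homOfLE (Order.le_succ k)) ≫ W.map (homOfLE (Order.succ_le_succ hk.le)) ≫
            (s i).inv ≫ Ξ.map (g.f i le_rfl) ≫ b := by
          have h2 : (s k).inv ≫ Ξ.map (W.map (homOfLE hk.le)) ≫ Ξ.map (g.f i le_rfl) ≫ b
              = W.map (homOfLE (Order.succ_le_succ hk.le)) ≫ (s i).inv ≫
                Ξ.map (g.f i le_rfl) ≫ b := by
            rw [← Category.assoc, ← hinv k i hk.le]; simp only [Category.assoc]
          rw [h2]
      _ = W.map (homOfLE hk.le) ≫ W.map (homOfLE (Order.le_succ i)) ≫ (s i).inv ≫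
            Ξ.map (g.f i le_rfl) ≫ b := by
          rw [← Category.assoc, ← W.map_comp, ← e1, W.map_comp]
          simp only [Category.assoc]
end
section
variable {E : Type u₂} [Category.{v₂} E]
variable {Ξ : E ⥤ E} {W : Ordinal.{w} ⥤ E}
  {s : ∀ i : Ordinal.{w}, Ξ.obj (W.obj i) ≅ W.obj (Order.succ i)}
  {X : E} {b : Ξ.obj X ⟶ X}

theorem sol_nonempty (init : IsInitial (W.obj 0))
    (snat : ∀ (i j : Ordinal.{w}) (h : i ≤ j),
      (s i).hom ≫ W.map (homOfLE (Order.succ_le_succ h)) =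
        Ξ.map (W.map (homOfLE h)) ≫ (s j).hom)
    (colim : ∀ i : Ordinal.{w}, Order.IsSuccLimit i → IsColimit (chainCocone W i)) :
    ∀ i : Ordinal.{w}, Nonempty (Sol Ξ W s X b i) := by
  have initAt : ∀ (j : Ordinal.{w}), j = 0 → IsInitial (W.obj j) := by
    rintro j rfl; exact init
  intro i
  induction i using Ordinal.induction with
  | h i IH =>
    rcases Ordinal.zero_or_succ_or_isSuccLimit i with hi | ⟨k, hk⟩ | hi
    · subst hi
      refine ⟨⟨fun j h => eqToHom (congrArg W.obj (nonpos_iff_eq_zero.mp h)) ≫ init.to X,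
        fun j k hjk hk => (initAt j (nonpos_iff_eq_zero.mp (hjk.trans hk))).hom_ext _ _,
        fun j hj => absurd (Order.succ_le_iff.mp hj) (by simp)⟩⟩
    · subst hk
      obtain ⟨prev⟩ := IH k (Order.lt_succ_iff.mpr le_rfl)
      have hkey := sol_key init snat colim k prev
      refine ⟨⟨fun j h =>
        if hj : j ≤ k then prev.f j hj else
          eqToHom (congrArg W.obj
              (le_antisymm h (Order.succ_le_of_lt (not_le.mp hj)))) ≫
            (s k).inv ≫ Ξ.map (prev.f k le_rfl) ≫ b, ?_, ?_⟩⟩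
      · intro j j' hjk hk'
        by_cases h2 : j' ≤ k
        · have h1 : j ≤ k := hjk.trans h2
          simp only [dif_pos h1, dif_pos h2]
          exact prev.compat j j' hjk h2
        · have hj' : j' = Order.succ k :=
            le_antisymm hk' (Order.succ_le_of_lt (not_le.mp h2))
          subst hj'
          by_cases hj : j ≤ k
          · simp only [dif_pos hj, dif_neg h2, eqToHom_refl, Category.id_comp]
            have e1 : (homOfLE hjk : j ⟶ Order.succ k)
                = homOfLE hj ≫ homOfLE (Order.le_succ k) := rfl
            rw [e1, W.map_comp, Category.assoc, ← hkey]
            exact prev.compat j k hj le_rfl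
          · have hj2 : j = Order.succ k :=
              le_antisymm hjk (Order.succ_le_of_lt (not_le.mp hj))
            subst hj2
            simp only [dif_neg hj]
            have e2 : homOfLE hjk = 𝟙 (Order.succ k) := rfl
            rw [e2, W.map_id, Category.id_comp]
      · intro j hj
        by_cases h2 : Order.succ j ≤ k
        · have h1 : j ≤ k := (Order.le_succ j).trans h2
          simp only [dif_pos h2, dif_pos h1]
          exact prev.succEq j h2
        · have hjk : j = k := by
            have h3 : j ≤ k := Order.succ_le_succ_iff.mp hj
            have h4 : k ≤ j := Order.lt_succ_iff.mp (not_le.mp h2)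
            exact le_antisymm h3 h4
          subst hjk
          simp only [dif_neg h2, dif_pos (le_refl _), eqToHom_refl, Category.id_comp]
    · -- limit case
      have prevs : ∀ j, j < i → Sol Ξ W s X b j := fun j hj => (IH j hj).some
      have hnat : ∀ (j k : {j : Ordinal.{w} // j < i}) (f : j ⟶ k),
          (belowIncl i ⋙ W).map f ≫ (prevs k.1 k.2).f k.1 le_rfl =
            (prevs j.1 j.2).f j.1 le_rfl ≫ 𝟙 X := by
        intro j k f
        have hjk : j.1 ≤ k.1 := leOfHom f
        dsimp [belowIncl, Monotone.functor]
        rw [Category.comp_id]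
        have e1 := (prevs k.1 k.2).compat j.1 k.1 hjk le_rfl
        rw [← e1]
        exact sol_unique init colim j.1 k.1 j.1 _ le_rfl _ _
      let coc : Cocone (belowIncl i ⋙ W) :=
        ⟨X, ⟨fun j => (prevs j.1 j.2).f j.1 le_rfl, hnat⟩⟩
      refine ⟨⟨fun j h =>
        if hj : j < i then (prevs j hj).f j le_rfl else
          eqToHom (congrArg W.obj (le_antisymm h (not_lt.mp hj))) ≫
            (colim i hi).desc coc, ?_, ?_⟩⟩
      · intro j k hjk hk
        by_cases hk' : k < i
        · have hj' : j < i := lt_of_le_of_lt hjk hk'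
          simp only [dif_pos hj', dif_pos hk']
          rw [← (prevs k hk').compat j k hjk le_rfl]
          exact sol_unique init colim j j k le_rfl _ _ _
        · have : k = i := le_antisymm hk (not_lt.mp hk')
          subst this
          by_cases hj : j < k
          · simp only [dif_pos hj, dif_neg (lt_irrefl k), eqToHom_refl, Category.id_comp]
            erw [Category.id_comp]
            exact ((colim k hi).fac coc ⟨j, hj⟩).symm
          · have : j = k := le_antisymm hjk (not_lt.mp hj)
            subst this
            simp only [dif_neg hj]
            have e2 : homOfLE hjk = 𝟙 j := rfl
            rw [e2, W.map_id, Category.id_comp]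
      · intro j hj
        have hji : j < i := lt_of_lt_of_le (Order.lt_succ j) hj
        have hsj : Order.succ j < i := hi.succ_lt hji
        simp only [dif_pos hsj, dif_pos hji]
        rw [(prevs (Order.succ j) hsj).succEq j le_rfl,
          sol_unique init colim j (Order.succ j) j ((Order.le_succ j).trans le_rfl) le_rfl
            (prevs (Order.succ j) hsj) (prevs j hji)]
end
section
variable {E : Type u₂} [Category.{v₂} E]
variable {Ξ : E ⥤ E} {W : Ordinal.{w} ⥤ E}
  {s : ∀ i : Ordinal.{w}, Ξ.obj (W.obj i) ≅ W.obj (Order.succ i)}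

noncomputable def isInitial_of_converges (init : IsInitial (W.obj 0))
    (snat : ∀ (i j : Ordinal.{w}) (h : i ≤ j),
      (s i).hom ≫ W.map (homOfLE (Order.succ_le_succ h)) =
        Ξ.map (W.map (homOfLE h)) ≫ (s j).hom)
    (colim : ∀ i : Ordinal.{w}, Order.IsSuccLimit i → IsColimit (chainCocone W i))
    (l : Ordinal.{w}) (hl : IsIso (W.map (homOfLE (Order.le_succ l)))) :
    IsInitial (⟨W.obj l, (s l).hom ≫ inv (W.map (homOfLE (Order.le_succ l)))⟩ :
      Endofunctor.Algebra Ξ) := by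
  have sol : ∀ A : Endofunctor.Algebra Ξ, Sol Ξ W s A.a A.str l := fun A =>
    (sol_nonempty (X := A.a) (b := A.str) init snat colim l).some
  have hstr : ∀ A : Endofunctor.Algebra Ξ,
      Ξ.map ((sol A).f l le_rfl) ≫ A.str =
        ((s l).hom ≫ inv (W.map (homOfLE (Order.le_succ l)))) ≫ (sol A).f l le_rfl := by
    intro A
    have hk := sol_key (X := A.a) (b := A.str) init snat colim l (sol A)
    have h5 : inv (W.map (homOfLE (Order.le_succ l))) ≫ (sol A).f l le_rfl
        = (s l).inv ≫ Ξ.map ((sol A).f l le_rfl) ≫ A.str := by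
      rw [IsIso.inv_comp_eq]; exact hk
    rw [Category.assoc, h5, Iso.hom_inv_id_assoc]
  refine IsInitial.ofUniqueHom (fun A => ⟨(sol A).f l le_rfl, hstr A⟩) ?_
  intro A m
  -- build a partial solution from `m`
  let gm : Sol Ξ W s A.a A.str l :=
    { f := fun j h => W.map (homOfLE h) ≫ m.f
      compat := fun j k hjk hk => by
        rw [← Category.assoc, ← W.map_comp]; rfl
      succEq := fun j hj => by
        have hm := m.h
        dsimp at hm
        have e1 : (homOfLE (Order.succ_le_succ ((Order.le_succ j).trans hj))) =
            (homOfLE hj ≫ homOfLE (Order.le_succ l) :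
              Order.succ j ⟶ Order.succ l) := rfl
        calc W.map (homOfLE hj) ≫ m.f
            = W.map (homOfLE hj) ≫ W.map (homOfLE (Order.le_succ l)) ≫
              inv (W.map (homOfLE (Order.le_succ l))) ≫ m.f := by
              rw [IsIso.hom_inv_id_assoc]
          _ = W.map (homOfLE (Order.succ_le_succ ((Order.le_succ j).trans hj))) ≫
              inv (W.map (homOfLE (Order.le_succ l))) ≫ m.f := by
              rw [e1, W.map_comp]; simp only [Category.assoc]
          _ = (s j).inv ≫ (s j).hom ≫
              W.map (homOfLE (Order.succ_le_succ ((Order.le_succ j).trans hj))) ≫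
              inv (W.map (homOfLE (Order.le_succ l))) ≫ m.f := by
              rw [Iso.inv_hom_id_assoc]
          _ = (s j).inv ≫ Ξ.map (W.map (homOfLE ((Order.le_succ j).trans hj))) ≫
              (s l).hom ≫ inv (W.map (homOfLE (Order.le_succ l))) ≫ m.f := by
              rw [← Category.assoc ((s j).hom), snat j l ((Order.le_succ j).trans hj)]
              simp only [Category.assoc]
          _ = (s j).inv ≫ Ξ.map (W.map (homOfLE ((Order.le_succ j).trans hj))) ≫
              Ξ.map m.f ≫ A.str := by
              rw [hm]; simp only [Category.assoc]
          _ = (s j).inv ≫ Ξ.map (W.map (homOfLE ((Order.le_succ j).trans hj)) ≫ m.f) ≫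
              A.str := by rw [Functor.map_comp]; simp only [Category.assoc] }
  have hu := sol_unique (X := A.a) (b := A.str) init colim l l l le_rfl le_rfl gm (sol A)
  apply Endofunctor.Algebra.Hom.ext
  have : gm.f l le_rfl = m.f := by
    show W.map (homOfLE le_rfl) ≫ m.f = m.f
    have : (homOfLE (le_refl l)) = 𝟙 l := rfl
    rw [this, W.map_id, Category.id_comp]
  rw [← this, hu]
end

end Stmt11Aux

theorem stmt11 (Φ : C ⥤ C) (Ψ : D ⥤ D) (L : C ⥤ D) (R : D ⥤ C) (adj : L ⊣ R)
    (ρ : (R ⋙ Φ ⋙ L) ⟶ Ψ)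
    -- `D` has an initial object and all colimits of chains
    [HasInitial D] (hchains : ∀ (J : Type (w + 1)) (_ : LinearOrder J), HasColimitsOfShape J D)
    -- `Ψ` has an initial algebra `ι_Ψ`
    (ιΨ : Endofunctor.Algebra Ψ) (hιΨ : IsInitial ιΨ)
    -- the initial chain of `Ψ`
    (W : Ordinal.{w} ⥤ D) (hW : InitialChainData Ψ W)
    -- (1) `ρ_{Ψ^i 0}` is an isomorphism for each ordinal `i`
    (h₁ : ∀ i : Ordinal.{w}, IsIso (ρ.app (W.obj i)))
    -- (2) the initial chain of `Ψ` converges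
    (h₂ : ∃ l : Ordinal.{w}, IsIso (W.map (homOfLE (Order.le_succ l)))) :
    Nonempty (IsInitial
      (⟨ιΨ.a, ρ.app ιΨ.a ≫ ιΨ.str⟩ : Endofunctor.Algebra (R ⋙ Φ ⋙ L))) := by
  obtain ⟨l, hl⟩ := h₂
  let sΨ : ∀ i : Ordinal.{w}, Ψ.obj (W.obj i) ≅ W.obj (Order.succ i) :=
    fun i => eqToIso (hW.succ_obj i).symm
  have snatΨ : ∀ (i j : Ordinal.{w}) (h : i ≤ j),
      (sΨ i).hom ≫ W.map (homOfLE (Order.succ_le_succ h)) =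
        Ψ.map (W.map (homOfLE h)) ≫ (sΨ j).hom := by
    intro i j h
    rw [hW.succ_map i j h]
    simp [sΨ]
  let sΞ : ∀ i : Ordinal.{w}, (R ⋙ Φ ⋙ L).obj (W.obj i) ≅ W.obj (Order.succ i) :=
    fun i => (@asIso _ _ _ _ _ (h₁ i)) ≪≫ sΨ i
  have snatΞ : ∀ (i j : Ordinal.{w}) (h : i ≤ j),
      (sΞ i).hom ≫ W.map (homOfLE (Order.succ_le_succ h)) =
        (R ⋙ Φ ⋙ L).map (W.map (homOfLE h)) ≫ (sΞ j).hom := by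
    intro i j h
    dsimp [sΞ]
    rw [Category.assoc, snatΨ i j h, ← Category.assoc, ← ρ.naturality, Category.assoc]
    rfl
  have initB := isInitial_of_converges (s := sΨ) hW.isInitial snatΨ hW.isColimit l hl
  have initA := isInitial_of_converges (s := sΞ) hW.isInitial snatΞ hW.isColimit l hl
  let T := Endofunctor.Algebra.functorOfNatTrans ρ
  let algB : Endofunctor.Algebra Ψ :=
    ⟨W.obj l, (sΨ l).hom ≫ inv (W.map (homOfLE (Order.le_succ l)))⟩
  let algA : Endofunctor.Algebra (R ⋙ Φ ⋙ L) :=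
    ⟨W.obj l, (sΞ l).hom ≫ inv (W.map (homOfLE (Order.le_succ l)))⟩
  have hTB : T.obj algB = algA := by
    dsimp [T, algB, algA, sΞ, Endofunctor.Algebra.functorOfNatTrans]
    congr 1
    rw [Category.assoc]
  have hTι : T.obj ιΨ = (⟨ιΨ.a, ρ.app ιΨ.a ≫ ιΨ.str⟩ :
      Endofunctor.Algebra (R ⋙ Φ ⋙ L)) := rfl
  exact ⟨initA.ofIso (eqToIso hTB.symm ≪≫ T.mapIso (hιΨ.uniqueUpToIso initB).symm ≪≫
    eqToIso hTι)⟩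
end

section
/- Let I and A be small categories, J₁ and J₂ categories, B₁ and B₂ cocomplete locally small categories, and Φ : I × A → A a functor. Consider (K₁,T₁)- and (K₂,T₂)-extensions Φ_{K₁,T₁} : J₁ × B₁ → B₁ and Φ_{K₂,T₂} : J₂ × B₂ → B₂ of Φ, where K_i : I → J_i and T_i : A → B_i. If there is a fully faithful functor H : J₂ → J₁ and an adjunction L ⊣ R with L : B₁ → B₂ and R : B₂ → B₁ such that L ∘ T₁ = T₂ and K₁ = H ∘ K₂, then L ∘ Φ_{K₁,T₁} ∘ (H × R) ≅ Φ_{K₂,T₂}. -/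
/-!
STATEMENT 13: Let `I` and `A` be small categories, `J₁` and `J₂` categories, `B₁` and `B₂`
cocomplete locally small categories, and `Φ : I × A → A` a functor.  Consider `(K₁,T₁)`- and
`(K₂,T₂)`-extensions `Φ_{K₁,T₁} : J₁ × B₁ → B₁` and `Φ_{K₂,T₂} : J₂ × B₂ → B₂` of `Φ`, i.e.
pointwise left Kan extensions of `T_i ∘ Φ` along `K_i × T_i`.  If there is a fully faithful
functor `H : J₂ → J₁` and an adjunction `L ⊣ R` with `L : B₁ → B₂` and `R : B₂ → B₁` such that
`L ∘ T₁ = T₂` and `K₁ = H ∘ K₂`, then `L ∘ Φ_{K₁,T₁} ∘ (H × R) ≅ Φ_{K₂,T₂}`.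
-/

open CategoryTheory

universe u₁ u₂ v₃ u₃ v₄ u₄ v₅ u₅ v₆ u₆

section Aux

variable {I : Type u₁} [SmallCategory I] {A : Type u₂} [SmallCategory A]
    {J₁ : Type u₃} [Category.{v₃} J₁] {J₂ : Type u₄} [Category.{v₄} J₂]
    {B₁ : Type u₅} [Category.{v₅} B₁] {B₂ : Type u₆} [Category.{v₆} B₂]
    (K₂ : I ⥤ J₂) (T₁ : A ⥤ B₁)
    (H : J₂ ⥤ J₁) [H.Full] [H.Faithful]
    (L : B₁ ⥤ B₂) (R : B₂ ⥤ B₁) (adj : L ⊣ R)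

/-- forward functor of the comma category comparison -/
@[simps]
def stmt13Fwd (j : J₂) (b : B₂) :
    CostructuredArrow (K₂.prod (T₁ ⋙ L)) (j, b) ⥤
      CostructuredArrow ((K₂ ⋙ H).prod T₁) (H.obj j, R.obj b) where
  obj g := CostructuredArrow.mk (Y := g.left)
    (⟨H.map g.hom.1, adj.homEquiv _ _ g.hom.2⟩ :
      ((K₂ ⋙ H).prod T₁).obj g.left ⟶ (H.obj j, R.obj b))
  map {g g'} φ := CostructuredArrow.homMk φ.left (by
    have w := CostructuredArrow.w φ
    have w1 := congrArg Prod.fst w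
    have w2 := congrArg Prod.snd w
    dsimp at w1 w2 ⊢
    refine Prod.ext ?_ ?_
    · dsimp; rw [← H.map_comp, w1]
    · dsimp; rw [← w2, Adjunction.homEquiv_naturality_left])

/-- backward functor of the comma category comparison -/
@[simps]
noncomputable def stmt13Bwd (j : J₂) (b : B₂) :
    CostructuredArrow ((K₂ ⋙ H).prod T₁) (H.obj j, R.obj b) ⥤
      CostructuredArrow (K₂.prod (T₁ ⋙ L)) (j, b) where
  obj h := CostructuredArrow.mk (Y := h.left)
    (⟨H.preimage h.hom.1, (adj.homEquiv _ _).symm h.hom.2⟩ :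
      (K₂.prod (T₁ ⋙ L)).obj h.left ⟶ (j, b))
  map {h h'} φ := CostructuredArrow.homMk φ.left (by
    have w := CostructuredArrow.w φ
    have w1 := congrArg Prod.fst w
    have w2 := congrArg Prod.snd w
    dsimp at w1 w2 ⊢
    refine Prod.ext ?_ ?_
    · dsimp
      apply H.map_injective
      rw [H.map_comp, H.map_preimage, H.map_preimage, ← w1]
    · dsimp
      rw [← Adjunction.homEquiv_naturality_left_symm, w2])

/-- comparison of comma categories -/
noncomputable def stmt13Equiv (j : J₂) (b : B₂) :
    CostructuredArrow (K₂.prod (T₁ ⋙ L)) (j, b) ≌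
      CostructuredArrow ((K₂ ⋙ H).prod T₁) (H.obj j, R.obj b) :=
  CategoryTheory.Equivalence.mk (stmt13Fwd K₂ T₁ H L R adj j b) (stmt13Bwd K₂ T₁ H L R adj j b)
    (NatIso.ofComponents (fun g => CostructuredArrow.isoMk (Iso.refl _) (by
        refine Prod.ext ?_ ?_
        · simp [stmt13Fwd, stmt13Bwd]
        · simp [stmt13Fwd, stmt13Bwd]))
      (by intros; apply CostructuredArrow.hom_ext; simp [stmt13Fwd, stmt13Bwd]))
    (NatIso.ofComponents (fun h => CostructuredArrow.isoMk (Iso.refl _) (by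
        refine Prod.ext ?_ ?_
        · simp [stmt13Fwd, stmt13Bwd]
        · simp [stmt13Fwd, stmt13Bwd]))
      (by intros; apply CostructuredArrow.hom_ext; simp [stmt13Fwd, stmt13Bwd]))

end Aux

set_option maxHeartbeats 1000000 in
theorem stmt13
    {I : Type u₁} [SmallCategory I] {A : Type u₂} [SmallCategory A]
    {J₁ : Type u₃} [Category.{v₃} J₁] {J₂ : Type u₄} [Category.{v₄} J₂]
    {B₁ : Type u₅} [Category.{v₅} B₁] [Limits.HasColimits B₁]
    {B₂ : Type u₆} [Category.{v₆} B₂] [Limits.HasColimits B₂]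
    (Φ : I × A ⥤ A)
    (K₁ : I ⥤ J₁) (K₂ : I ⥤ J₂) (T₁ : A ⥤ B₁) (T₂ : A ⥤ B₂)
    -- the `(K₁,T₁)`-extension of `Φ`: a pointwise left Kan extension of `T₁ ∘ Φ` along `K₁ × T₁`
    (E₁ : J₁ × B₁ ⥤ B₁) (u₁ : Φ ⋙ T₁ ⟶ (K₁.prod T₁) ⋙ E₁)
    (hE₁ : (Functor.LeftExtension.mk E₁ u₁).IsPointwiseLeftKanExtension)
    -- the `(K₂,T₂)`-extension of `Φ`: a pointwise left Kan extension of `T₂ ∘ Φ` along `K₂ × T₂`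
    (E₂ : J₂ × B₂ ⥤ B₂) (u₂ : Φ ⋙ T₂ ⟶ (K₂.prod T₂) ⋙ E₂)
    (hE₂ : (Functor.LeftExtension.mk E₂ u₂).IsPointwiseLeftKanExtension)
    -- a fully faithful functor `H` and an adjunction `L ⊣ R` compatible with the data
    (H : J₂ ⥤ J₁) [H.Full] [H.Faithful]
    (L : B₁ ⥤ B₂) (R : B₂ ⥤ B₁) (adj : L ⊣ R)
    (hT : T₁ ⋙ L = T₂) (hK : K₂ ⋙ H = K₁) :
    Nonempty ((H.prod R) ⋙ E₁ ⋙ L ≅ E₂) := by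
  subst hT hK
  -- comparison natural transformation
  let η : (K₂ ⋙ H).prod T₁ ⟶ (K₂.prod (T₁ ⋙ L)) ⋙ (H.prod R) :=
    { app := fun x => ⟨𝟙 (H.obj (K₂.obj x.1)), adj.unit.app (T₁.obj x.2)⟩
      naturality := fun x y f => by
        refine Prod.ext ?_ ?_
        · dsimp; simp
        · dsimp; simp }
  -- the unit of the composite extension
  let u' : Φ ⋙ (T₁ ⋙ L) ⟶ (K₂.prod (T₁ ⋙ L)) ⋙ ((H.prod R) ⋙ E₁ ⋙ L) :=
    Functor.whiskerRight u₁ L ≫ Functor.whiskerRight (Functor.whiskerRight η E₁) L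
  have hpw : (Functor.LeftExtension.mk ((H.prod R) ⋙ E₁ ⋙ L) u').IsPointwiseLeftKanExtension := by
    rintro ⟨j, b⟩
    haveI : Limits.PreservesColimit
        (CostructuredArrow.proj ((K₂ ⋙ H).prod T₁) (H.obj j, R.obj b) ⋙ Φ ⋙ T₁) L :=
      adj.leftAdjoint_preservesColimits.preservesColimitsOfShape.preservesColimit
    have hc := Limits.isColimitOfPreserves L (hE₁ (H.obj j, R.obj b))
    have hc2 := hc.whiskerEquivalence (stmt13Equiv K₂ T₁ H L R adj j b)
    refine Limits.IsColimit.ofIsoColimit hc2 (Limits.Cocones.ext (Iso.refl _) (fun g => ?_))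
    have key : (((stmt13Fwd K₂ T₁ H L R adj j b).obj g).hom :
        ((K₂ ⋙ H).prod T₁).obj g.left ⟶ (H.obj j, R.obj b)) =
        η.app g.left ≫ (H.prod R).map g.hom := by
      refine Prod.ext ?_ ?_
      · dsimp [η, stmt13Fwd]; simp
      · dsimp [η, stmt13Fwd]; simp [Adjunction.homEquiv_unit]
    dsimp
    refine (Category.comp_id _).trans ?_
    show L.map (u₁.app g.left ≫ E₁.map ((stmt13Fwd K₂ T₁ H L R adj j b).obj g).hom) =
      (L.map (u₁.app g.left) ≫ L.map (E₁.map (η.app g.left))) ≫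
        L.map (E₁.map ((H.prod R).map g.hom))
    rw [key, E₁.map_comp, L.map_comp, L.map_comp]
    simp
  haveI : ((H.prod R) ⋙ E₁ ⋙ L).IsLeftKanExtension u' := hpw.isLeftKanExtension
  haveI : E₂.IsLeftKanExtension u₂ := hE₂.isLeftKanExtension
  exact ⟨Functor.leftKanExtensionUnique _ u' _ u₂⟩
end

section
/- Let Φ : C → C be an endofunctor and (L ⊣ R, η, ε) an adjunction with L : D → C and R : C → D, unit η : id_D ⇒ R∘L and counit ε : L∘R ⇒ id_C. Then the functors Coalg_{L, εΦL} (sending a coalgebra (Y, d : Y → (RΦL)Y) with Y ∈ Fix_η(D) to (LY, (εΦL)_Y ∘ Ld)) and Coalg_{R, RΦε^{-1}} (sending a coalgebra (X, c : X → ΦX) with X ∈ Fix_ε(C) to (RX, RΦ(ε_X)^{-1} ∘ Rc)) form an adjoint equivalence Coalg(RΦL)|Fix_η(D) ≃ Coalg(Φ)|Fix_ε(C) with unit and counit given componentwise by η and ε. Moreover, if Φ̇ is a lifting of Φ along p : E → C and an adjunction (L̇ ⊣ Ṙ, η̇, ε̇) : F ⇄ E is a lifting of (L ⊣ R, η, ε)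 along q : F → D, p, then the corresponding adjoint equivalence Coalg(ṘΦ̇L̇)|Fix_η̇(F) ≃ Coalg(Φ̇)|Fix_ε̇(E) is a lifting of this one along Coalg(q), Coalg(p). -/
/-!
STATEMENT 15: Let `Φ : C → C` be an endofunctor and `(L ⊣ R, η, ε)` an adjunction with
`L : D → C` and `R : C → D`, unit `η : id_D ⇒ R∘L` and counit `ε : L∘R ⇒ id_C`.  Then the
functors `Coalg_{L, εΦL}` (sending a coalgebra `(Y, d : Y → (RΦL)Y)` with `Y ∈ Fix_η(D)` to
`(LY, (εΦL)_Y ∘ Ld)`) and `Coalg_{R, RΦε⁻¹}` (sending a coalgebra `(X, c : X → ΦX)` with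
`X ∈ Fix_ε(C)` to `(RX, RΦ(ε_X)⁻¹ ∘ Rc)`) form an adjoint equivalence
`Coalg(RΦL)|Fix_η(D) ≃ Coalg(Φ)|Fix_ε(C)` with unit and counit given componentwise by `η` and
`ε`.  Moreover, if `Φ̇` is a lifting of `Φ` along `p : E → C` and an adjunction
`(L̇ ⊣ Ṙ, η̇, ε̇) : F ⇄ E` is a lifting of `(L ⊣ R, η, ε)` along `q : F → D, p`, then the
corresponding adjoint equivalence `Coalg(ṘΦ̇L̇)|Fix_η̇(F) ≃ Coalg(Φ̇)|Fix_ε̇(E)` is a lifting of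
this one along `Coalg(q), Coalg(p)`.
-/

open CategoryTheory CategoryTheory.Limits

universe v₁ v₂ v₃ v₄ u₁ u₂ u₃ u₄

variable {C : Type u₁} [Category.{v₁} C] {D : Type u₂} [Category.{v₂} D]
  {E : Type u₃} [Category.{v₃} E] {F : Type u₄} [Category.{v₄} F]

/-- The restriction of the category of `Ψ`-coalgebras to the full subcategory given by `Q`. -/
abbrev CoalgSub {D' : Type u₂} [Category.{v₂} D'] (Ψ : D' ⥤ D') (Q : D' → Prop) :=
  ObjectProperty.FullSubcategory (fun Y : Endofunctor.Coalgebra Ψ => Q Y.V)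

/-- The lifted functor `Coalg_{L,α}` sending `(Y, d)` to `(LY, α_Y ∘ Ld)` and `f` to `Lf`. -/
def coalgMap {D' : Type u₂} [Category.{v₂} D'] {C' : Type u₁} [Category.{v₁} C']
    (Ψ : D' ⥤ D') (Φ : C' ⥤ C') (Q : D' → Prop) (P : C' → Prop)
    (L : D' ⥤ C') (hL : ∀ Y : D', Q Y → P (L.obj Y))
    (α : ObjectProperty.ι Q ⋙ Ψ ⋙ L ⟶ ObjectProperty.ι Q ⋙ L ⋙ Φ) :
    CoalgSub Ψ Q ⥤ CoalgSub Φ P where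
  obj Y := ⟨⟨L.obj Y.obj.V, L.map Y.obj.str ≫ α.app ⟨Y.obj.V, Y.property⟩⟩, hL _ Y.property⟩
  map {A B} f := InducedCategory.homMk
    { f := L.map (Endofunctor.Coalgebra.Hom.f f.hom)
      h := by
        have hn := α.naturality (X := ⟨A.obj.V, A.property⟩) (Y := ⟨B.obj.V, B.property⟩)
          (InducedCategory.homMk (Endofunctor.Coalgebra.Hom.f f.hom))
        have hf := Endofunctor.Coalgebra.Hom.h f.hom
        dsimp [InducedCategory.homMk] at hn ⊢
        rw [Category.assoc, ← hn, ← Category.assoc, ← L.map_comp, hf, L.map_comp,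
          Category.assoc] }
  map_id A := by
    apply InducedCategory.hom_ext
    apply Endofunctor.Coalgebra.ext
    show L.map (𝟙 A.obj.V) = 𝟙 (L.obj A.obj.V)
    simp
  map_comp {A B E} f g := by
    apply InducedCategory.hom_ext
    apply Endofunctor.Coalgebra.ext
    show L.map (Endofunctor.Coalgebra.Hom.f f.hom ≫ Endofunctor.Coalgebra.Hom.f g.hom) =
      L.map (Endofunctor.Coalgebra.Hom.f f.hom) ≫ L.map (Endofunctor.Coalgebra.Hom.f g.hom)
    simp

/-- `L` maps `Fix_η` into `Fix_ε`. -/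
theorem isIso_counit_app_of_isIso_unit_app {C' : Type u₁} [Category.{v₁} C']
    {D' : Type u₂} [Category.{v₂} D'] {L : C' ⥤ D'} {R : D' ⥤ C'} (adj : L ⊣ R)
    (X : C') (h : IsIso (adj.unit.app X)) : IsIso (adj.counit.app (L.obj X)) := by
  haveI := h
  haveI : IsIso (L.map (adj.unit.app X) ≫ adj.counit.app (L.obj X)) := by
    rw [adj.left_triangle_components X]; exact IsIso.id _
  exact IsIso.of_isIso_comp_left (L.map (adj.unit.app X)) (adj.counit.app (L.obj X))

/-- `R` maps `Fix_ε` into `Fix_η`. -/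
theorem isIso_unit_app_of_isIso_counit_app {C' : Type u₁} [Category.{v₁} C']
    {D' : Type u₂} [Category.{v₂} D'] {L : C' ⥤ D'} {R : D' ⥤ C'} (adj : L ⊣ R)
    (Y : D') (h : IsIso (adj.counit.app Y)) : IsIso (adj.unit.app (R.obj Y)) := by
  haveI := h
  haveI : IsIso (adj.unit.app (R.obj Y) ≫ R.map (adj.counit.app Y)) := by
    rw [adj.right_triangle_components Y]; exact IsIso.id _
  exact IsIso.of_isIso_comp_right (adj.unit.app (R.obj Y)) (R.map (adj.counit.app Y))

section Aux

open Endofunctor Endofunctor.Coalgebra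

/-- hom ext helper -/
lemma coalg_hom_ext {Ψ : C ⥤ C} {Q : C → Prop} {A B : CoalgSub Ψ Q} {f g : A ⟶ B}
    (h : Endofunctor.Coalgebra.Hom.f f.hom = Endofunctor.Coalgebra.Hom.f g.hom) : f = g :=
  InducedCategory.hom_ext (Endofunctor.Coalgebra.ext h)

lemma coalg_isIso_of_isIso_f {Ψ : C ⥤ C} {Q : C → Prop} {A B : CoalgSub Ψ Q} (f : A ⟶ B)
    (hf : IsIso (Endofunctor.Coalgebra.Hom.f f.hom)) : IsIso f := by
  refine ⟨⟨InducedCategory.homMk { f := inv (Endofunctor.Coalgebra.Hom.f f.hom), h := ?_ }, ?_, ?_⟩⟩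
  · have h := Endofunctor.Coalgebra.Hom.h f.hom
    rw [Functor.map_inv, IsIso.comp_inv_eq, Category.assoc, h, IsIso.inv_hom_id_assoc]
  · apply coalg_hom_ext
    show Endofunctor.Coalgebra.Hom.f f.hom ≫ inv (Endofunctor.Coalgebra.Hom.f f.hom) = 𝟙 _
    simp
  · apply coalg_hom_ext
    show inv (Endofunctor.Coalgebra.Hom.f f.hom) ≫ Endofunctor.Coalgebra.Hom.f f.hom = 𝟙 _
    simp

variable (Φ : C ⥤ C) (L : D ⥤ C) (R : C ⥤ D) (adj : L ⊣ R)
    (α : ObjectProperty.ι (fun Y : D => IsIso (adj.unit.app Y)) ⋙ (L ⋙ Φ ⋙ R) ⋙ L ⟶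
         ObjectProperty.ι (fun Y : D => IsIso (adj.unit.app Y)) ⋙ L ⋙ Φ)
    (hα : ∀ Y : ObjectProperty.FullSubcategory (fun Y : D => IsIso (adj.unit.app Y)),
      α.app Y = adj.counit.app (Φ.obj (L.obj Y.obj)))
    (β : ObjectProperty.ι (fun X : C => IsIso (adj.counit.app X)) ⋙ Φ ⋙ R ⟶
         ObjectProperty.ι (fun X : C => IsIso (adj.counit.app X)) ⋙ R ⋙ (L ⋙ Φ ⋙ R))
    (hβ : ∀ X : ObjectProperty.FullSubcategory (fun X : C => IsIso (adj.counit.app X)),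
      β.app X = R.map (Φ.map (@CategoryTheory.inv _ _ _ _ (adj.counit.app X.obj) X.property)))

/-- The adjunction between the two coalgMap functors. -/
def coalgAdj :
    coalgMap (L ⋙ Φ ⋙ R) Φ (fun Y : D => IsIso (adj.unit.app Y))
      (fun X : C => IsIso (adj.counit.app X)) L
      (fun Y => isIso_counit_app_of_isIso_unit_app adj Y) α ⊣
    coalgMap Φ (L ⋙ Φ ⋙ R) (fun X : C => IsIso (adj.counit.app X))
      (fun Y : D => IsIso (adj.unit.app Y)) R
      (fun X => isIso_unit_app_of_isIso_counit_app adj X) β where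
  unit :=
    { app := fun Y => InducedCategory.homMk
        { f := adj.unit.app Y.obj.V
          h := by
            haveI : IsIso (adj.unit.app Y.obj.V) := Y.property
            haveI : IsIso (adj.counit.app (L.obj Y.obj.V)) :=
              isIso_counit_app_of_isIso_unit_app adj _ Y.property
            dsimp [coalgMap]
            rw [hα, hβ]
            dsimp
            rw [R.map_comp,
              show L.map (adj.unit.app Y.obj.V) = inv (adj.counit.app (L.obj Y.obj.V)) from
                IsIso.eq_inv_of_inv_hom_id (adj.left_triangle_components _)]
            simp only [← Functor.comp_map L R]
            rw [← Category.assoc, ← Category.assoc, ← adj.unit.naturality Y.obj.str,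
              Functor.id_map]
            simp only [Category.assoc, Functor.comp_obj]
            rw [adj.right_triangle_components_assoc] }
      naturality := fun A B f => by
        apply coalg_hom_ext
        exact adj.unit.naturality (Endofunctor.Coalgebra.Hom.f f.hom) }
  counit :=
    { app := fun X => InducedCategory.homMk
        { f := adj.counit.app X.obj.V
          h := by
            haveI : IsIso (adj.counit.app X.obj.V) := X.property
            dsimp [coalgMap]
            rw [hα, hβ]
            dsimp
            have hn := adj.counit.naturality (Φ.map (inv (adj.counit.app X.obj.V)))
            have hc := adj.counit.naturality X.obj.str
            simp only [Functor.comp_map, Functor.id_map, Functor.comp_obj, Functor.id_obj]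
              at hn hc
            simp only [L.map_comp, Category.assoc]
            rw [reassoc_of% hn, ← Φ.map_comp, IsIso.inv_hom_id, Φ.map_id, Category.comp_id]
            exact hc }
      naturality := fun A B f => by
        apply coalg_hom_ext
        exact adj.counit.naturality (Endofunctor.Coalgebra.Hom.f f.hom) }
  left_triangle_components := fun Y => by
    apply coalg_hom_ext
    exact adj.left_triangle_components Y.obj.V
  right_triangle_components := fun X => by
    apply coalg_hom_ext
    exact adj.right_triangle_components X.obj.V

end Aux

lemma conj_of_heq {A A' B B' : C} (h1 : A = A') (h2 : B = B') {f : A ⟶ B} {g : A' ⟶ B'}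
    (h : HEq f g) : f = eqToHom h1 ≫ g ≫ eqToHom h2.symm := by
  subst h1; subst h2
  rw [eqToHom_refl, eqToHom_refl, Category.id_comp, Category.comp_id]
  exact eq_of_heq h

lemma heq_of_conj {A A' B B' : C} (h1 : A = A') (h2 : B = B') {f : A ⟶ B} {g : A' ⟶ B'}
    (h : f = eqToHom h1 ≫ g ≫ eqToHom h2.symm) : HEq f g := by
  subst h1; subst h2
  rw [eqToHom_refl, eqToHom_refl, Category.id_comp, Category.comp_id] at h
  exact heq_of_eq h

lemma isIso_of_heq {A A' B B' : C} (h1 : A = A') (h2 : B = B') {f : A ⟶ B} {g : A' ⟶ B'}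
    (h : HEq f g) (hf : IsIso f) : IsIso g := by
  subst h1; subst h2; rw [← eq_of_heq h]; exact hf

lemma coalg_obj_ext {Ψ : C ⥤ C} {Q : C → Prop} {A B : CoalgSub Ψ Q}
    (h1 : A.obj.V = B.obj.V) (h2 : HEq A.obj.str B.obj.str) : A = B := by
  rcases A with ⟨⟨V, s⟩, hA⟩
  rcases B with ⟨⟨V', s'⟩, hB⟩
  dsimp at h1 h2
  subst h1
  rw [eq_of_heq h2]

lemma coalg_eqToHom_f {Ψ : C ⥤ C} {Q : C → Prop} {A B : CoalgSub Ψ Q} (h : A = B) :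
    Endofunctor.Coalgebra.Hom.f (eqToHom h).hom =
      eqToHom (congrArg (fun Z : CoalgSub Ψ Q => Z.obj.V) h) := by
  subst h; rfl

/-- projection of coalgebras along a lifting `p` -/
def coalgProj (p : E ⥤ C) (Φd : E ⥤ E) (Φ : C ⥤ C) (hΦ : Φd ⋙ p = p ⋙ Φ)
    (Qd : E → Prop) (Q : C → Prop) (hq : ∀ X : E, Qd X → Q (p.obj X)) :
    CoalgSub Φd Qd ⥤ CoalgSub Φ Q where
  obj X := ⟨⟨p.obj X.obj.V, p.map X.obj.str ≫ eqToHom (Functor.congr_obj hΦ X.obj.V)⟩,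
    hq _ X.property⟩
  map {A B} f := InducedCategory.homMk
    { f := p.map (Endofunctor.Coalgebra.Hom.f f.hom)
      h := by
        have hc := Functor.congr_hom hΦ (Endofunctor.Coalgebra.Hom.f f.hom)
        simp only [Functor.comp_map] at hc
        have hf := Endofunctor.Coalgebra.Hom.h f.hom
        dsimp
        calc (p.map A.obj.str ≫ eqToHom (Functor.congr_obj hΦ A.obj.V)) ≫
              Φ.map (p.map (Endofunctor.Coalgebra.Hom.f f.hom))
            = p.map A.obj.str ≫ (eqToHom (Functor.congr_obj hΦ A.obj.V) ≫
                Φ.map (p.map (Endofunctor.Coalgebra.Hom.f f.hom)) ≫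
                eqToHom (Functor.congr_obj hΦ B.obj.V).symm) ≫
                eqToHom (Functor.congr_obj hΦ B.obj.V) := by simp
          _ = p.map A.obj.str ≫ p.map (Φd.map (Endofunctor.Coalgebra.Hom.f f.hom)) ≫
                eqToHom (Functor.congr_obj hΦ B.obj.V) := by rw [← hc]
          _ = p.map (Endofunctor.Coalgebra.Hom.f f.hom) ≫ p.map B.obj.str ≫
                eqToHom (Functor.congr_obj hΦ B.obj.V) := by
                rw [← Category.assoc, ← p.map_comp, hf, p.map_comp, Category.assoc] }
  map_id A := by
    apply coalg_hom_ext
    show p.map (𝟙 A.obj.V) = 𝟙 (p.obj A.obj.V)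
    simp
  map_comp f g := by
    apply coalg_hom_ext
    show p.map (_ ≫ _) = p.map _ ≫ p.map _
    simp

lemma coalg_comp_f {Ψ : C ⥤ C} {Q : C → Prop} {A B C' : CoalgSub Ψ Q} (f : A ⟶ B) (g : B ⟶ C') :
    Endofunctor.Coalgebra.Hom.f (f ≫ g).hom =
      Endofunctor.Coalgebra.Hom.f f.hom ≫ Endofunctor.Coalgebra.Hom.f g.hom := rfl

lemma coalg_hom_heq {Ψ : C ⥤ C} {Q : C → Prop} {A A' B B' : CoalgSub Ψ Q}
    (h1 : A = A') (h2 : B = B') {f : A ⟶ B} {g : A' ⟶ B'}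
    (hf : HEq (Endofunctor.Coalgebra.Hom.f f.hom) (Endofunctor.Coalgebra.Hom.f g.hom)) : HEq f g := by
  subst h1; subst h2; exact heq_of_eq (coalg_hom_ext (eq_of_heq hf))

lemma nat_app_heq {C' : Type u₁} [Category.{v₁} C'] {D' : Type u₂} [Category.{v₂} D']
    {F' G' : C' ⥤ D'} (τ : F' ⟶ G') {A B : C'} (h : A = B) : HEq (τ.app A) (τ.app B) := by
  subst h; rfl

lemma map_heq {C' : Type u₁} [Category.{v₁} C'] {D' : Type u₂} [Category.{v₂} D']
    (G : C' ⥤ D') {A A' B B' : C'} (h1 : A = A') (h2 : B = B') {f : A ⟶ B} {g : A' ⟶ B'}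
    (h : HEq f g) : HEq (G.map f) (G.map g) := by
  subst h1; subst h2; rw [eq_of_heq h]

lemma inv_heq {A A' B B' : C} (h1 : A = A') (h2 : B = B') {f : A ⟶ B} {g : A' ⟶ B'}
    [IsIso f] [IsIso g] (h : HEq f g) : HEq (inv f) (inv g) := by
  subst h1; subst h2; obtain rfl := eq_of_heq h; rfl


theorem stmt15
    (Φ : C ⥤ C) (L : D ⥤ C) (R : C ⥤ D) (adj : L ⊣ R)
    -- `α = εΦL` and `β = RΦε⁻¹`
    (α : ObjectProperty.ι (fun Y : D => IsIso (adj.unit.app Y)) ⋙ (L ⋙ Φ ⋙ R) ⋙ L ⟶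
         ObjectProperty.ι (fun Y : D => IsIso (adj.unit.app Y)) ⋙ L ⋙ Φ)
    (hα : ∀ Y : ObjectProperty.FullSubcategory (fun Y : D => IsIso (adj.unit.app Y)),
      α.app Y = adj.counit.app (Φ.obj (L.obj Y.obj)))
    (β : ObjectProperty.ι (fun X : C => IsIso (adj.counit.app X)) ⋙ Φ ⋙ R ⟶
         ObjectProperty.ι (fun X : C => IsIso (adj.counit.app X)) ⋙ R ⋙ (L ⋙ Φ ⋙ R))
    (hβ : ∀ X : ObjectProperty.FullSubcategory (fun X : C => IsIso (adj.counit.app X)),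
      β.app X = R.map (Φ.map (@CategoryTheory.inv _ _ _ _ (adj.counit.app X.obj) X.property)))
    -- the lifting data: `Φ̇` lifts `Φ` along `p`, `(L̇ ⊣ Ṙ, η̇, ε̇)` lifts `(L ⊣ R, η, ε)`
    (p : E ⥤ C) (q : F ⥤ D)
    (Φd : E ⥤ E) (hΦ : Φd ⋙ p = p ⋙ Φ)
    (Ld : F ⥤ E) (Rd : E ⥤ F) (adjd : Ld ⊣ Rd)
    (hLp : Ld ⋙ p = q ⋙ L) (hRq : Rd ⋙ q = p ⋙ R)
    (hunit : ∀ Y : F, HEq (q.map (adjd.unit.app Y)) (adj.unit.app (q.obj Y)))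
    (hcounit : ∀ X : E, HEq (p.map (adjd.counit.app X)) (adj.counit.app (p.obj X)))
    -- `α̇ = ε̇Φ̇L̇` and `β̇ = ṘΦ̇ε̇⁻¹`
    (αd : ObjectProperty.ι (fun Y : F => IsIso (adjd.unit.app Y)) ⋙
            (Ld ⋙ Φd ⋙ Rd) ⋙ Ld ⟶
          ObjectProperty.ι (fun Y : F => IsIso (adjd.unit.app Y)) ⋙ Ld ⋙ Φd)
    (hαd : ∀ Y : ObjectProperty.FullSubcategory (fun Y : F => IsIso (adjd.unit.app Y)),
      αd.app Y = adjd.counit.app (Φd.obj (Ld.obj Y.obj)))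
    (βd : ObjectProperty.ι (fun X : E => IsIso (adjd.counit.app X)) ⋙ Φd ⋙ Rd ⟶
          ObjectProperty.ι (fun X : E => IsIso (adjd.counit.app X)) ⋙ Rd ⋙
            (Ld ⋙ Φd ⋙ Rd))
    (hβd : ∀ X : ObjectProperty.FullSubcategory (fun X : E => IsIso (adjd.counit.app X)),
      βd.app X = Rd.map (Φd.map (@CategoryTheory.inv _ _ _ _ (adjd.counit.app X.obj)
        X.property))) :
    -- the undotted adjoint equivalence `Coalg(RΦL)|Fix_η(D) ≃ Coalg(Φ)|Fix_ε(C)` ...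
    ∃ adj' : coalgMap (L ⋙ Φ ⋙ R) Φ (fun Y : D => IsIso (adj.unit.app Y))
               (fun X : C => IsIso (adj.counit.app X)) L
               (fun Y => isIso_counit_app_of_isIso_unit_app adj Y) α ⊣
             coalgMap Φ (L ⋙ Φ ⋙ R) (fun X : C => IsIso (adj.counit.app X))
               (fun Y : D => IsIso (adj.unit.app Y)) R
               (fun X => isIso_unit_app_of_isIso_counit_app adj X) β,
    -- ... the dotted adjoint equivalence `Coalg(ṘΦ̇L̇)|Fix_η̇(F) ≃ Coalg(Φ̇)|Fix_ε̇(E)` ...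
    ∃ adjd' : coalgMap (Ld ⋙ Φd ⋙ Rd) Φd (fun Y : F => IsIso (adjd.unit.app Y))
                (fun X : E => IsIso (adjd.counit.app X)) Ld
                (fun Y => isIso_counit_app_of_isIso_unit_app adjd Y) αd ⊣
              coalgMap Φd (Ld ⋙ Φd ⋙ Rd) (fun X : E => IsIso (adjd.counit.app X))
                (fun Y : F => IsIso (adjd.unit.app Y)) Rd
                (fun X => isIso_unit_app_of_isIso_counit_app adjd X) βd,
    -- ... and the projection functors `Coalg(p)`, `Coalg(q)` restricted to the subcategories,
    ∃ Coalgp : CoalgSub Φd (fun X : E => IsIso (adjd.counit.app X)) ⥤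
                 CoalgSub Φ (fun X : C => IsIso (adj.counit.app X)),
    ∃ Coalgq : CoalgSub (Ld ⋙ Φd ⋙ Rd) (fun Y : F => IsIso (adjd.unit.app Y)) ⥤
                 CoalgSub (L ⋙ Φ ⋙ R) (fun Y : D => IsIso (adj.unit.app Y)),
      -- both are adjoint equivalences with unit and counit given componentwise by `η` and `ε`
      -- (resp. `η̇` and `ε̇`)
      (∀ Y, Endofunctor.Coalgebra.Hom.f (adj'.unit.app Y).hom = adj.unit.app Y.obj.V) ∧
      (∀ X, Endofunctor.Coalgebra.Hom.f (adj'.counit.app X).hom = adj.counit.app X.obj.V) ∧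
      IsIso adj'.unit ∧ IsIso adj'.counit ∧
      (∀ Y, Endofunctor.Coalgebra.Hom.f (adjd'.unit.app Y).hom = adjd.unit.app Y.obj.V) ∧
      (∀ X, Endofunctor.Coalgebra.Hom.f (adjd'.counit.app X).hom = adjd.counit.app X.obj.V) ∧
      IsIso adjd'.unit ∧ IsIso adjd'.counit ∧
      -- `Coalg(p)` sends a coalgebra `(X, c)` to `(pX, pc)` (and acts as `p` on morphisms),
      -- and similarly `Coalg(q)`
      (∀ X, (Coalgp.obj X).obj.V = p.obj X.obj.V) ∧
      (∀ X, HEq (Coalgp.obj X).obj.str (p.map X.obj.str)) ∧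
      (∀ (X X') (f : X ⟶ X'), HEq (Endofunctor.Coalgebra.Hom.f (Coalgp.map f).hom)
        (p.map (Endofunctor.Coalgebra.Hom.f f.hom))) ∧
      (∀ Y, (Coalgq.obj Y).obj.V = q.obj Y.obj.V) ∧
      (∀ Y, HEq (Coalgq.obj Y).obj.str (q.map Y.obj.str)) ∧
      (∀ (Y Y') (g : Y ⟶ Y'), HEq (Endofunctor.Coalgebra.Hom.f (Coalgq.map g).hom)
        (q.map (Endofunctor.Coalgebra.Hom.f g.hom))) ∧
      -- the dotted equivalence is a lifting of the undotted one along `Coalg(q)`, `Coalg(p)`: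
      -- the functors commute with the projections ...
      (coalgMap (Ld ⋙ Φd ⋙ Rd) Φd _ _ Ld
          (fun Y => isIso_counit_app_of_isIso_unit_app adjd Y) αd ⋙ Coalgp =
        Coalgq ⋙ coalgMap (L ⋙ Φ ⋙ R) Φ _ _ L
          (fun Y => isIso_counit_app_of_isIso_unit_app adj Y) α) ∧
      (coalgMap Φd (Ld ⋙ Φd ⋙ Rd) _ _ Rd
          (fun X => isIso_unit_app_of_isIso_counit_app adjd X) βd ⋙ Coalgq =
        Coalgp ⋙ coalgMap Φ (L ⋙ Φ ⋙ R) _ _ R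
          (fun X => isIso_unit_app_of_isIso_counit_app adj X) β) ∧
      -- ... and the unit and counit are liftings of the unit and counit
      (∀ Y, HEq (Coalgq.map (adjd'.unit.app Y)) (adj'.unit.app (Coalgq.obj Y))) ∧
      (∀ X, HEq (Coalgp.map (adjd'.counit.app X)) (adj'.counit.app (Coalgp.obj X))) := by
  have hPsi : (Ld ⋙ Φd ⋙ Rd) ⋙ q = q ⋙ (L ⋙ Φ ⋙ R) := by
    calc (Ld ⋙ Φd ⋙ Rd) ⋙ q = Ld ⋙ Φd ⋙ Rd ⋙ q := rfl
      _ = Ld ⋙ Φd ⋙ p ⋙ R := by rw [hRq]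
      _ = Ld ⋙ (Φd ⋙ p) ⋙ R := rfl
      _ = Ld ⋙ (p ⋙ Φ) ⋙ R := by rw [hΦ]
      _ = (Ld ⋙ p) ⋙ Φ ⋙ R := rfl
      _ = (q ⋙ L) ⋙ Φ ⋙ R := by rw [hLp]
  have hEp : ∀ X : E, p.obj (Ld.obj (Rd.obj X)) = L.obj (R.obj (p.obj X)) := fun X =>
    (Functor.congr_obj hLp (Rd.obj X)).trans (congrArg L.obj (Functor.congr_obj hRq X))
  have hEq2 : ∀ Y : F, q.obj (Rd.obj (Ld.obj Y)) = R.obj (L.obj (q.obj Y)) := fun Y =>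
    (Functor.congr_obj hRq (Ld.obj Y)).trans (congrArg R.obj (Functor.congr_obj hLp Y))
  have hquFix : ∀ Y : F, IsIso (adjd.unit.app Y) → IsIso (adj.unit.app (q.obj Y)) := by
    intro Y hY
    haveI := hY
    exact isIso_of_heq rfl (hEq2 Y) (hunit Y) inferInstance
  have hpcFix : ∀ X : E, IsIso (adjd.counit.app X) → IsIso (adj.counit.app (p.obj X)) := by
    intro X hX
    haveI := hX
    exact isIso_of_heq (hEp X) rfl (hcounit X) inferInstance
  have hcomm1 : coalgMap (Ld ⋙ Φd ⋙ Rd) Φd (fun Y : F => IsIso (adjd.unit.app Y))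
        (fun X : E => IsIso (adjd.counit.app X)) Ld
        (fun Y => isIso_counit_app_of_isIso_unit_app adjd Y) αd ⋙
        coalgProj p Φd Φ hΦ _ _ hpcFix =
      coalgProj q (Ld ⋙ Φd ⋙ Rd) (L ⋙ Φ ⋙ R) hPsi _ _ hquFix ⋙
        coalgMap (L ⋙ Φ ⋙ R) Φ (fun Y : D => IsIso (adj.unit.app Y))
        (fun X : C => IsIso (adj.counit.app X)) L
        (fun Y => isIso_counit_app_of_isIso_unit_app adj Y) α := by
    refine CategoryTheory.Functor.ext (fun Y => ?_) (fun A B f => ?_)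
    · apply coalg_obj_ext
      · exact Functor.congr_obj hLp Y.obj.V
      · dsimp [coalgMap, coalgProj]
        rw [hαd, hα, Functor.map_comp p, Functor.map_comp L, eqToHom_map L]
        simp only [comp_eqToHom_heq_iff, Category.assoc]
        refine heq_comp (Functor.congr_obj hLp Y.obj.V) (Functor.congr_obj hLp _)
          (congrArg Φ.obj (Functor.congr_obj hLp Y.obj.V))
          (Functor.hcongr_hom hLp Y.obj.str) ?_
        simp only [eqToHom_comp_heq_iff, comp_eqToHom_heq_iff, heq_eqToHom_comp_iff,
          heq_comp_eqToHom_iff]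
        exact (hcounit (Φd.obj (Ld.obj Y.obj.V))).trans
          (nat_app_heq adj.counit ((Functor.congr_obj hΦ (Ld.obj Y.obj.V)).trans
            (congrArg Φ.obj (Functor.congr_obj hLp Y.obj.V))))
    · apply coalg_hom_ext
      rw [coalg_comp_f, coalg_comp_f, coalg_eqToHom_f, coalg_eqToHom_f]
      exact Functor.congr_hom hLp (Endofunctor.Coalgebra.Hom.f f.hom)
  have hcomm2 : coalgMap Φd (Ld ⋙ Φd ⋙ Rd) (fun X : E => IsIso (adjd.counit.app X))
        (fun Y : F => IsIso (adjd.unit.app Y)) Rd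
        (fun X => isIso_unit_app_of_isIso_counit_app adjd X) βd ⋙
        coalgProj q (Ld ⋙ Φd ⋙ Rd) (L ⋙ Φ ⋙ R) hPsi _ _ hquFix =
      coalgProj p Φd Φ hΦ _ _ hpcFix ⋙
        coalgMap Φ (L ⋙ Φ ⋙ R) (fun X : C => IsIso (adj.counit.app X))
        (fun Y : D => IsIso (adj.unit.app Y)) R
        (fun X => isIso_unit_app_of_isIso_counit_app adj X) β := by
    refine CategoryTheory.Functor.ext (fun X => ?_) (fun A B f => ?_)
    · apply coalg_obj_ext
      · exact Functor.congr_obj hRq X.obj.V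
      · haveI : IsIso (adjd.counit.app X.obj.V) := X.property
        haveI : IsIso (adj.counit.app (p.obj X.obj.V)) := hpcFix _ X.property
        dsimp [coalgMap, coalgProj]
        rw [hβd, hβ, Functor.map_comp q, Functor.map_comp R, eqToHom_map R]
        simp only [comp_eqToHom_heq_iff, Category.assoc]
        refine heq_comp (Functor.congr_obj hRq X.obj.V)
          (Functor.congr_obj hRq (Φd.obj X.obj.V))
          (congrArg (fun Z => R.obj (Φ.obj (L.obj Z))) (Functor.congr_obj hRq X.obj.V))
          (Functor.hcongr_hom hRq X.obj.str) ?_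
        simp only [eqToHom_comp_heq_iff, comp_eqToHom_heq_iff, heq_eqToHom_comp_iff,
          heq_comp_eqToHom_iff]
        refine (Functor.hcongr_hom hRq (Φd.map (inv (adjd.counit.app X.obj.V)))).trans ?_
        refine map_heq R (Functor.congr_obj hΦ X.obj.V)
          ((Functor.congr_obj hΦ _).trans (congrArg Φ.obj (hEp X.obj.V))) ?_
        refine (Functor.hcongr_hom hΦ (inv (adjd.counit.app X.obj.V))).trans ?_
        refine map_heq Φ rfl (hEp X.obj.V) ?_
        rw [Functor.map_inv]
        exact inv_heq (hEp X.obj.V) rfl (hcounit X.obj.V)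
    · apply coalg_hom_ext
      rw [coalg_comp_f, coalg_comp_f, coalg_eqToHom_f, coalg_eqToHom_f]
      exact Functor.congr_hom hRq (Endofunctor.Coalgebra.Hom.f f.hom)
  refine ⟨coalgAdj Φ L R adj α hα β hβ, coalgAdj Φd Ld Rd adjd αd hαd βd hβd,
    coalgProj p Φd Φ hΦ _ _ hpcFix, coalgProj q (Ld ⋙ Φd ⋙ Rd) (L ⋙ Φ ⋙ R) hPsi _ _ hquFix,
    fun Y => rfl, fun X => rfl, ?_, ?_, fun Y => rfl, fun X => rfl, ?_, ?_,
    fun X => rfl, ?_, fun X X' f => HEq.rfl, fun Y => rfl, ?_, fun Y Y' g => HEq.rfl,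
    hcomm1, hcomm2, ?_, ?_⟩
  · haveI : ∀ Y, IsIso ((coalgAdj Φ L R adj α hα β hβ).unit.app Y) := fun Y =>
      coalg_isIso_of_isIso_f _ Y.property
    exact NatIso.isIso_of_isIso_app _
  · haveI : ∀ X, IsIso ((coalgAdj Φ L R adj α hα β hβ).counit.app X) := fun X =>
      coalg_isIso_of_isIso_f _ X.property
    exact NatIso.isIso_of_isIso_app _
  · haveI : ∀ Y, IsIso ((coalgAdj Φd Ld Rd adjd αd hαd βd hβd).unit.app Y) := fun Y =>
      coalg_isIso_of_isIso_f _ Y.property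
    exact NatIso.isIso_of_isIso_app _
  · haveI : ∀ X, IsIso ((coalgAdj Φd Ld Rd adjd αd hαd βd hβd).counit.app X) := fun X =>
      coalg_isIso_of_isIso_f _ X.property
    exact NatIso.isIso_of_isIso_app _
  · exact fun X => heq_of_conj rfl (Functor.congr_obj hΦ X.obj.V).symm (by simp [coalgProj]; exact (Category.id_comp _).symm)
  · exact fun Y => heq_of_conj rfl (Functor.congr_obj hPsi Y.obj.V).symm (by simp [coalgProj]; exact (Category.id_comp _).symm)
  · intro Y
    apply coalg_hom_heq
    · rfl
    · exact (Functor.congr_obj hcomm2 _).trans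
        (congrArg (coalgMap Φ (L ⋙ Φ ⋙ R) (fun X : C => IsIso (adj.counit.app X))
          (fun Y : D => IsIso (adj.unit.app Y)) R
          (fun X => isIso_unit_app_of_isIso_counit_app adj X) β).obj
          (Functor.congr_obj hcomm1 Y))
    · exact hunit Y.obj.V
  · intro X
    apply coalg_hom_heq
    · exact (Functor.congr_obj hcomm1 _).trans
        (congrArg (coalgMap (L ⋙ Φ ⋙ R) Φ (fun Y : D => IsIso (adj.unit.app Y))
          (fun X : C => IsIso (adj.counit.app X)) L
          (fun Y => isIso_counit_app_of_isIso_unit_app adj Y) α).obj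
          (Functor.congr_obj hcomm2 X))
    · rfl
    · exact hcounit X.obj.V
end

section
/- Let (P, rew) be a Markov chain over a set S with target ✓, and let Φ and Ψ be the Bellman operators for partial and total expected rewards, with least fixed points μΦ and μΨ. If the Markov chain is almost surely reaching, i.e. π₁((μΦ)(s)) = 1 for every s ∈ S, then π₂ ∘ μΦ = μΨ and (μΦ)(s) = (1, (μΨ)(s)) for every s ∈ S. -/
/-!
STATEMENT 16: Let `(P, rew)` be a Markov chain over a set `S` with target `✓` (i.e. `P` assigns
to each state a finitely supported probability distribution on `S ⊕ {✓}` and `rew : S → ℕ`),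
and let `Φ` and `Ψ` be the Bellman operators for partial and total expected rewards on the
complete lattices `[S, [0,1] × [0,∞]]` and `[S, [0,∞]]`, with least fixed points `μΦ` and `μΨ`.
If the Markov chain is almost surely reaching, i.e. `π₁((μΦ)(s)) = 1` for every `s ∈ S`, then
`π₂ ∘ μΦ = μΨ` and `(μΦ)(s) = (1, (μΨ)(s))` for every `s ∈ S`.
-/

open scoped ENNReal

lemma tsum_sum_punit {α : Type*} (f : α ⊕ PUnit → ℝ≥0∞) :
    ∑' x, f x = (∑' a, f (Sum.inl a)) + f (Sum.inr PUnit.unit) := by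
  have h1 : HasSum (f ∘ Subtype.val : Set.range (Sum.inl : α → α ⊕ PUnit) → ℝ≥0∞)
      (∑' a, f (Sum.inl a)) :=
    Sum.inl_injective.hasSum_range_iff.2 ENNReal.summable.hasSum
  have h2 : HasSum (f ∘ Subtype.val : Set.range (Sum.inr : PUnit → α ⊕ PUnit) → ℝ≥0∞)
      (f (Sum.inr PUnit.unit)) := by
    have h : (∑' p : PUnit, f (Sum.inr p)) = f (Sum.inr PUnit.unit) := by
      simp [tsum_fintype]
    exact h ▸ Sum.inr_injective.hasSum_range_iff.2 ENNReal.summable.hasSum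
  exact (h1.add_isCompl Set.isCompl_range_inl_range_inr h2).tsum_eq

theorem stmt16 {S : Type*}
    -- the Markov chain: transition probabilities with finite support summing to one,
    -- and a reward function
    (P : S → S ⊕ PUnit → ℝ≥0∞) (rew : S → ℕ)
    (hfin : ∀ s, (Function.support (P s)).Finite)
    (hsum : ∀ s, ∑' x, P s x = 1)
    -- the Bellman operator for partial expected rewards on `[S, [0,1] × [0,∞]]`
    (Φ : (S → {p : ℝ≥0∞ // p ≤ 1} × ℝ≥0∞) → (S → {p : ℝ≥0∞ // p ≤ 1} × ℝ≥0∞))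
    (hΦmono : Monotone Φ)
    (hΦ : ∀ k s,
      ((Φ k s).1 : ℝ≥0∞) =
          P s (Sum.inr PUnit.unit) + ∑' s' : S, P s (Sum.inl s') * ((k s').1 : ℝ≥0∞) ∧
      (Φ k s).2 =
          (rew s : ℝ≥0∞) * P s (Sum.inr PUnit.unit) +
            ∑' s' : S, P s (Sum.inl s') * ((k s').2 + (rew s : ℝ≥0∞) * ((k s').1 : ℝ≥0∞)))
    -- the Bellman operator for total expected rewards on `[S, [0,∞]]`
    (Ψ : (S → ℝ≥0∞) → (S → ℝ≥0∞)) (hΨmono : Monotone Ψ)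
    (hΨ : ∀ k s, Ψ k s = (rew s : ℝ≥0∞) + ∑' s' : S, P s (Sum.inl s') * k s')
    -- the least fixed points
    (μΦ : S → {p : ℝ≥0∞ // p ≤ 1} × ℝ≥0∞)
    (hμΦfix : Φ μΦ = μΦ) (hμΦleast : ∀ k, Φ k = k → μΦ ≤ k)
    (μΨ : S → ℝ≥0∞)
    (hμΨfix : Ψ μΨ = μΨ) (hμΨleast : ∀ k, Ψ k = k → μΨ ≤ k)
    -- almost sure reachability
    (hreach : ∀ s, ((μΦ s).1 : ℝ≥0∞) = 1) :
    (fun s => (μΦ s).2) = μΨ ∧ ∀ s, μΦ s = (⟨1, le_rfl⟩, μΨ s) := by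
  -- total probability one, split into the S-part and the ✓-part
  have hone : ∀ s, (∑' s' : S, P s (Sum.inl s')) + P s (Sum.inr PUnit.unit) = 1 := by
    intro s
    rw [← tsum_sum_punit (P s)]
    exact hsum s
  -- the key algebraic computation
  have key : ∀ (g : S → ℝ≥0∞) (s : S),
      (rew s : ℝ≥0∞) * P s (Sum.inr PUnit.unit) +
          ∑' s' : S, P s (Sum.inl s') * (g s' + (rew s : ℝ≥0∞) * 1) =
        (rew s : ℝ≥0∞) + ∑' s' : S, P s (Sum.inl s') * g s' := by
    intro g s
    have h1 : (∑' s' : S, P s (Sum.inl s') * (g s' + (rew s : ℝ≥0∞) * 1)) =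
        (∑' s' : S, P s (Sum.inl s') * g s') +
          (∑' s' : S, P s (Sum.inl s')) * (rew s : ℝ≥0∞) := by
      rw [← ENNReal.tsum_mul_right, ← ENNReal.tsum_add]
      exact tsum_congr fun s' => by ring
    rw [h1]
    have h2 : (rew s : ℝ≥0∞) * P s (Sum.inr PUnit.unit) +
        ((∑' s' : S, P s (Sum.inl s') * g s') +
          (∑' s' : S, P s (Sum.inl s')) * (rew s : ℝ≥0∞)) =
        (rew s : ℝ≥0∞) * ((∑' s' : S, P s (Sum.inl s')) + P s (Sum.inr PUnit.unit)) +
          ∑' s' : S, P s (Sum.inl s') * g s' := by ring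
    rw [h2, hone s, mul_one]
  -- `k := (1, μΨ)` is a fixed point of `Φ`
  set k : S → {p : ℝ≥0∞ // p ≤ 1} × ℝ≥0∞ := fun s => (⟨1, le_rfl⟩, μΨ s) with hk
  have hkfix : Φ k = k := by
    funext s
    have h1 := (hΦ k s).1
    have h2 := (hΦ k s).2
    apply Prod.ext
    · apply Subtype.ext
      show ((Φ k s).1 : ℝ≥0∞) = 1
      rw [h1]
      simp only [hk, mul_one]
      rw [add_comm]
      exact hone s
    · show (Φ k s).2 = μΨ s
      rw [h2]
      simp only [hk]
      rw [key μΨ s, ← hΨ μΨ s]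
      exact congrFun hμΨfix s
  have hle : ∀ s, (μΦ s).2 ≤ μΨ s := fun s => (hμΦleast k hkfix s).2
  -- `π₂ ∘ μΦ` is a fixed point of `Ψ`
  have hgfix : Ψ (fun s => (μΦ s).2) = fun s => (μΦ s).2 := by
    funext s
    have h2 := (hΦ μΦ s).2
    rw [hμΦfix] at h2
    rw [hΨ]
    rw [h2]
    have : (∑' s' : S, P s (Sum.inl s') * ((μΦ s').2 + (rew s : ℝ≥0∞) * ((μΦ s').1 : ℝ≥0∞))) =
        ∑' s' : S, P s (Sum.inl s') * ((μΦ s').2 + (rew s : ℝ≥0∞) * 1) := by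
      exact tsum_congr fun s' => by rw [hreach s']
    rw [this, key (fun s' => (μΦ s').2) s]
  have hge : ∀ s, μΨ s ≤ (μΦ s).2 := fun s => hμΨleast _ hgfix s
  have heq : ∀ s, (μΦ s).2 = μΨ s := fun s => le_antisymm (hle s) (hge s)
  refine ⟨funext heq, fun s => ?_⟩
  exact Prod.ext (Subtype.ext (hreach s)) (heq s)
end

section
/- Let c : S → (S ⊕ {✓})^Σ be a deterministic labeled transition system with safe states A ⊆ S, and let Φ_c and Ψ_c be the partial-correctness and total-correctness operators, with least fixed points μΦ_c and μΨ_c. If for every s ∈ S and v ∈ Σ^ω the first component of (μΦ_c)(s,v) equals ⊤ (every path eventually terminates), then (μΦ_c)(s,v) = (⊤, (μΨ_c)(s,v)) for every s ∈ S and v ∈ Σ^ω; in particular π₂ ∘ μΦ_c = μΨ_c. -/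
/-!
STATEMENT 17: Let `c : S → (S ⊕ {✓})^Σ` be a deterministic labeled transition system with safe
states `A ⊆ S` (with Boolean indicator `A : S → Bool`), and let `Φ_c` and `Ψ_c` be the
partial-correctness operator on `[S×Σ^ω, (2×2)_l]` (lexicographic order) and the
total-correctness operator on `[S×Σ^ω, 2]`, with least fixed points `μΦ_c` and `μΨ_c`.
If for every `s ∈ S` and `v ∈ Σ^ω` the first component of `(μΦ_c)(s,v)` equals `⊤` (every path
eventually terminates), then `(μΦ_c)(s,v) = (⊤, (μΨ_c)(s,v))` for every `s` and `v`;
in particular `π₂ ∘ μΦ_c = μΨ_c`.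
-/

/-- The lexicographic order on `2 × 2` (with `Bool` playing the role of `2 = {⊥,⊤}`,
`false = ⊥ < ⊤ = true`). -/
def lexLe (a b : Bool × Bool) : Prop :=
  a.1 < b.1 ∨ (a.1 = b.1 ∧ a.2 ≤ b.2)

/-- The partial-correctness predicate transformer `Φ_c` on `[S × Σ^ω, (2×2)_l]`. -/
def PhiC {S Γ : Type*} (c : S → Γ → S ⊕ PUnit) (A : S → Bool)
    (k : S × (ℕ → Γ) → Bool × Bool) : S × (ℕ → Γ) → Bool × Bool :=
  fun x =>
    match c x.1 (x.2 0) with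
    | Sum.inr _ => (true, A x.1)
    | Sum.inl s' =>
        ((k (s', fun n => x.2 (n + 1))).1,
          !(k (s', fun n => x.2 (n + 1))).1 || (k (s', fun n => x.2 (n + 1))).2)

/-- The total-correctness predicate transformer `Ψ_c` on `[S × Σ^ω, 2]`. -/
def PsiC {S Γ : Type*} (c : S → Γ → S ⊕ PUnit) (A : S → Bool)
    (k : S × (ℕ → Γ) → Bool) : S × (ℕ → Γ) → Bool :=
  fun x =>
    match c x.1 (x.2 0) with
    | Sum.inr _ => A x.1
    | Sum.inl s' => k (s', fun n => x.2 (n + 1))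

theorem stmt17 {S Γ : Type*} (c : S → Γ → S ⊕ PUnit) (A : S → Bool)
    -- `μΦ_c` is the least fixed point of `Φ_c` w.r.t. the pointwise lexicographic order
    (μΦ : S × (ℕ → Γ) → Bool × Bool)
    (hμΦfix : PhiC c A μΦ = μΦ)
    (hμΦleast : ∀ k, PhiC c A k = k → ∀ x, lexLe (μΦ x) (k x))
    -- `μΨ_c` is the least fixed point of `Ψ_c` w.r.t. the pointwise order on `Bool`
    (μΨ : S × (ℕ → Γ) → Bool)
    (hμΨfix : PsiC c A μΨ = μΨ)
    (hμΨleast : ∀ k, PsiC c A k = k → ∀ x, μΨ x ≤ k x)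
    -- every path eventually terminates
    (hterm : ∀ (s : S) (v : ℕ → Γ), (μΦ (s, v)).1 = true) :
    (∀ (s : S) (v : ℕ → Γ), μΦ (s, v) = (true, μΨ (s, v))) ∧
    (fun x => (μΦ x).2) = μΨ := by
  -- `fun x => (μΦ x).2` is a fixed point of Ψ
  have hfix2 : PsiC c A (fun x => (μΦ x).2) = (fun x => (μΦ x).2) := by
    funext x
    obtain ⟨s, v⟩ := x
    have h := congrFun hμΦfix (s, v)
    simp only [PsiC, PhiC] at h ⊢
    cases hc : c s (v 0) with
    | inr u =>
      rw [hc] at h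
      rw [← h]
    | inl s' =>
      rw [hc] at h
      rw [← h]
      simp [hterm s' (fun n => v (n + 1))]
  have hle1 : ∀ x, μΨ x ≤ (μΦ x).2 := hμΨleast _ hfix2
  -- `fun x => (true, μΨ x)` is a fixed point of Φ
  have hfix1 : PhiC c A (fun x => (true, μΨ x)) = (fun x => (true, μΨ x)) := by
    funext x
    obtain ⟨s, v⟩ := x
    have h := congrFun hμΨfix (s, v)
    simp only [PsiC, PhiC] at h ⊢
    cases hc : c s (v 0) with
    | inr u =>
      rw [hc] at h
      rw [← h]
    | inl s' =>
      rw [hc] at h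
      simp [← h]
  have hle2 : ∀ x, (μΦ x).2 ≤ μΨ x := by
    intro x
    have h := hμΦleast _ hfix1 x
    rcases h with h | ⟨_, h⟩
    · exfalso
      obtain ⟨s, v⟩ := x
      rw [hterm s v] at h
      exact absurd h (by simp)
    · exact h
  have hmain : ∀ (s : S) (v : ℕ → Γ), μΦ (s, v) = (true, μΨ (s, v)) := by
    intro s v
    have this' : (μΦ (s, v)).2 = ((true, μΨ (s, v)) : Bool × Bool).2 := le_antisymm (hle2 (s, v)) (hle1 (s, v))
    exact Prod.ext (hterm s v) this'
  exact ⟨hmain, funext fun x => le_antisymm (hle2 x) (hle1 x)⟩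
end

section
/- Fix M ∈ ℕ and let c : S → (P(S) × ℕ) ⊕ {✓} be a nondeterministic transition system with resources. Let Φ be the resource-bounded reachability operator on [S, M_⊥] and Ψ the reachability operator on [S, 2], with least fixed points μΦ and μΨ. If μΦ(s) ∈ {⊥, M} for every s ∈ S (every reachable state has a path to ✓ whose accumulated resource is at least M), then for every s ∈ S: μΦ(s) = M if and only if μΨ(s) = ⊤, and μΦ(s) = ⊥ if and only if μΨ(s) = ⊥. -/
/-!
STATEMENT 18: Fix `M ∈ ℕ` and let `c : S → (P(S) × ℕ) ⊕ {✓}` be a nondeterministic transition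
system with resources.  Let `Φ` be the resource-bounded reachability operator on `[S, M_⊥]`
(where `M_⊥ = {⊥} ∪ {0,…,M}`, modelled as `WithBot (Fin (M+1))`) and `Ψ` the reachability
operator on `[S, 2]` (with `2` modelled as `Prop`), with least fixed points `μΦ` and `μΨ`.
If `μΦ(s) ∈ {⊥, M}` for every `s ∈ S` (every reachable state has a path to `✓` whose
accumulated resource is at least `M`), then for every `s ∈ S`: `μΦ(s) = M` iff `μΨ(s) = ⊤`,
and `μΦ(s) = ⊥` iff `μΨ(s) = ⊥`.
-/

theorem stmt18 {S : Type*} (M : ℕ) (c : S → (Set S × ℕ) ⊕ PUnit)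
    -- the resource-bounded reachability operator `Φ` on `[S, M_⊥]`
    (Φ : (S → WithBot (Fin (M + 1))) → (S → WithBot (Fin (M + 1))))
    (hΦ : ∀ k s,
      (∀ u : PUnit, c s = Sum.inr u → Φ k s = ((0 : Fin (M + 1)) : WithBot (Fin (M + 1)))) ∧
      (∀ (X : Set S) (n : ℕ), c s = Sum.inl (X, n) →
        IsLUB {x : WithBot (Fin (M + 1)) |
            ∃ s' ∈ X, ∃ m : Fin (M + 1), k s' = (m : WithBot (Fin (M + 1))) ∧
              x = ((⟨min M (m.1 + n), Nat.lt_succ_of_le (min_le_left _ _)⟩ : Fin (M + 1)) :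
                    WithBot (Fin (M + 1)))}
          (Φ k s)))
    -- the reachability operator `Ψ` on `[S, 2]`
    (Ψ : (S → Prop) → (S → Prop))
    (hΨ : ∀ k s,
      (∀ u : PUnit, c s = Sum.inr u → (Ψ k s ↔ True)) ∧
      (∀ (X : Set S) (n : ℕ), c s = Sum.inl (X, n) → (Ψ k s ↔ ∃ s' ∈ X, k s')))
    -- the least fixed points
    (μΦ : S → WithBot (Fin (M + 1)))
    (hμΦfix : Φ μΦ = μΦ) (hμΦleast : ∀ k, Φ k = k → μΦ ≤ k)
    (μΨ : S → Prop)
    (hμΨfix : Ψ μΨ = μΨ) (hμΨleast : ∀ k, Ψ k = k → μΨ ≤ k)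
    -- every reachable state can reach `✓` accumulating at least `M` resources
    (hgrc : ∀ s, μΦ s = ⊥ ∨ μΦ s = ((Fin.last M : Fin (M + 1)) : WithBot (Fin (M + 1)))) :
    ∀ s, ((μΦ s = ((Fin.last M : Fin (M + 1)) : WithBot (Fin (M + 1)))) ↔ μΨ s) ∧
      ((μΦ s = ⊥) ↔ ¬ μΨ s) := by

  classical
  -- Direction 1: μΨ s → μΦ s ≠ ⊥
  have key1 : ∀ s, μΨ s → μΦ s ≠ ⊥ := by
    have hfix : Ψ (fun s => μΦ s ≠ ⊥) = fun s => μΦ s ≠ ⊥ := by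
      funext s
      apply propext
      rcases hc : c s with ⟨X, n⟩ | u
      · have h1 := (hΨ (fun s => μΦ s ≠ ⊥) s).2 X n hc
        have h2 := (hΦ μΦ s).2 X n hc
        rw [hμΦfix] at h2
        rw [h1]
        constructor
        · rintro ⟨s', hs', hne⟩
          rcases hm : μΦ s' with _ | m
          · exact absurd hm hne
          · have hx : ((⟨min M (m.1 + n), Nat.lt_succ_of_le (min_le_left _ _)⟩ :
                Fin (M + 1)) : WithBot (Fin (M + 1))) ∈
                {x : WithBot (Fin (M + 1)) |
                  ∃ s' ∈ X, ∃ m : Fin (M + 1), μΦ s' = (m : WithBot (Fin (M + 1))) ∧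
                    x = ((⟨min M (m.1 + n), Nat.lt_succ_of_le (min_le_left _ _)⟩ :
                      Fin (M + 1)) : WithBot (Fin (M + 1)))} :=
              ⟨s', hs', m, hm, rfl⟩
            have hle := h2.1 hx
            intro hbot
            rw [hbot] at hle
            exact WithBot.coe_ne_bot (le_bot_iff.mp hle)
        · intro hne
          by_contra hall
          push_neg at hall
          have hub : (⊥ : WithBot (Fin (M + 1))) ∈ upperBounds
              {x : WithBot (Fin (M + 1)) |
                ∃ s' ∈ X, ∃ m : Fin (M + 1), μΦ s' = (m : WithBot (Fin (M + 1))) ∧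
                  x = ((⟨min M (m.1 + n), Nat.lt_succ_of_le (min_le_left _ _)⟩ :
                    Fin (M + 1)) : WithBot (Fin (M + 1)))} := by
            rintro x ⟨s', hs', m, hm, rfl⟩
            exact absurd (hall s' hs' ▸ hm) (Ne.symm WithBot.coe_ne_bot)
          exact hne (le_bot_iff.mp (h2.2 hub))
      · have h1 := (hΨ (fun s => μΦ s ≠ ⊥) s).1 u hc
        have h2 := (hΦ μΦ s).1 u hc
        rw [hμΦfix] at h2
        simp [h1, h2]
    exact fun s hs => (hμΨleast _ hfix s) hs
  have key1' : ∀ s, μΨ s → μΦ s = ((Fin.last M : Fin (M + 1)) : WithBot (Fin (M + 1))) := by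
    intro s hs
    rcases hgrc s with h | h
    · exact absurd h (key1 s hs)
    · exact h
  -- the min clips to M
  have hmin : ∀ n : ℕ, (⟨min M ((Fin.last M).1 + n), Nat.lt_succ_of_le (min_le_left _ _)⟩ :
      Fin (M + 1)) = Fin.last M := by
    intro n
    apply Fin.ext
    simp only []
    exact Nat.min_eq_left (Nat.le_add_right _ _)
  -- Direction 2: ¬ μΨ s → μΦ s = ⊥, via a fixed point of Φ
  set k : S → WithBot (Fin (M + 1)) :=
    fun s => if μΨ s then μΦ s else ⊥ with hk
  have hΨiff : ∀ s X n, c s = Sum.inl (X, n) → (μΨ s ↔ ∃ s' ∈ X, μΨ s') := by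
    intro s X n hc
    have := (hΨ μΨ s).2 X n hc
    rwa [hμΨfix] at this
  have hkfix : Φ k = k := by
    funext s
    rcases hc : c s with ⟨X, n⟩ | u
    · by_cases hs : μΨ s
      · have hset : {x : WithBot (Fin (M + 1)) |
            ∃ s' ∈ X, ∃ m : Fin (M + 1), k s' = (m : WithBot (Fin (M + 1))) ∧
              x = ((⟨min M (m.1 + n), Nat.lt_succ_of_le (min_le_left _ _)⟩ :
                Fin (M + 1)) : WithBot (Fin (M + 1)))} =
            {((Fin.last M : Fin (M + 1)) : WithBot (Fin (M + 1)))} := by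
          apply Set.eq_singleton_iff_unique_mem.mpr
          constructor
          · obtain ⟨s', hs', hψ⟩ := (hΨiff s X n hc).mp hs
            refine ⟨s', hs', Fin.last M, ?_, by rw [hmin n]⟩
            simp only [hk, if_pos hψ]
            exact key1' s' hψ
          · rintro x ⟨s', hs', m, hm, rfl⟩
            by_cases hψ : μΨ s'
            · simp only [hk, if_pos hψ] at hm
              rw [key1' s' hψ] at hm
              have : Fin.last M = m := WithBot.coe_injective hm
              rw [← this, hmin n]
            · simp only [hk, if_neg hψ] at hm
              exact absurd hm.symm WithBot.coe_ne_bot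
        have h2 := (hΦ k s).2 X n hc
        rw [hset] at h2
        have := h2.unique isLUB_singleton
        rw [this, hk]
        simp only [if_pos hs]
        exact (key1' s hs).symm
      · have h2 := (hΦ k s).2 X n hc
        have hub : (⊥ : WithBot (Fin (M + 1))) ∈ upperBounds
            {x : WithBot (Fin (M + 1)) |
              ∃ s' ∈ X, ∃ m : Fin (M + 1), k s' = (m : WithBot (Fin (M + 1))) ∧
                x = ((⟨min M (m.1 + n), Nat.lt_succ_of_le (min_le_left _ _)⟩ :
                  Fin (M + 1)) : WithBot (Fin (M + 1)))} := by
          rintro x ⟨s', hs', m, hm, rfl⟩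
          exfalso
          have hψ : ¬ μΨ s' := fun h => hs ((hΨiff s X n hc).mpr ⟨s', hs', h⟩)
          simp only [hk, if_neg hψ] at hm
          exact WithBot.coe_ne_bot hm.symm
        have hbot := le_bot_iff.mp (h2.2 hub)
        rw [hbot, hk]
        simp [hs]
    · have hψ : μΨ s := by
        have := (hΨ μΨ s).1 u hc
        rw [hμΨfix] at this
        exact this.mpr trivial
      have h2 := (hΦ k s).1 u hc
      have h3 := (hΦ μΦ s).1 u hc
      rw [hμΦfix] at h3
      rw [h2, hk]
      simp only [if_pos hψ]
      exact h3.symm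
  have key2 : ∀ s, ¬ μΨ s → μΦ s = ⊥ := by
    intro s hs
    have := hμΦleast k hkfix s
    rw [hk] at this
    simp only [if_neg hs] at this
    exact le_bot_iff.mp this
  intro s
  constructor
  · constructor
    · intro h
      by_contra hs
      rw [key2 s hs] at h
      exact WithBot.coe_ne_bot h.symm
    · exact key1' s
  · constructor
    · intro h hs
      exact key1 s hs h
    · exact key2 s
end
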